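/- arXiv:1207.6583 — 7 statements merged into one kernel-verified Lean document; each statement's English description precedes it below -/
import Mathlib

section
/- Let S be a finite set of real numbers, f a Schwartz function, and K an integrable function with K(v) \ge |f(v)|^2 for all real v. Then \int_{-\infty}^{\infty} |\sum_{\gamma \in S} \hat{f}(t - \gamma)|^2 dt \le \sum_{\gamma, \gamma' \in S} \hat{K}(\gamma - \gamma'). -/
open MeasureTheory Finset

open FourierTransform Real Complex
private lemma l_mult {φ ψ : ℝ → ℂ} (hφ : Integrable φ) (hψ : Integrable ψ) :
    ∫ ξ : ℝ, FourierTransform.fourier φ ξ * ψ ξ = ∫ x : ℝ, φ x * FourierTransform.fourier ψ x := by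
  have hflip : (innerₗ ℝ).flip = innerₗ ℝ := by
    ext x y
    simp [real_inner_comm]
  have := VectorFourier.integral_fourierIntegral_smul_eq_flip (L := innerₗ ℝ)
    Real.continuous_fourierChar continuous_inner hφ hψ
  rw [hflip] at this
  simp only [smul_eq_mul] at this
  exact this

private lemma l_conj (φ : ℝ → ℂ) (ξ : ℝ) :
    FourierTransform.fourier (fun x => (starRingEnd ℂ) (φ x)) ξ
      = (starRingEnd ℂ) (FourierTransform.fourierInv φ ξ) := by
  rw [Real.fourier_real_eq_integral_exp_smul, Real.fourierInv_eq', ← integral_conj]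
  congr 1 with v
  simp only [smul_eq_mul, map_mul, ← Complex.exp_conj, map_mul, Complex.conj_I,
    Complex.conj_ofReal, mul_neg]
  norm_num
  left
  push_cast
  ring


private lemma l_shift (φ : ℝ → ℂ) (γ t : ℝ) :
    FourierTransform.fourier (fun v => Complex.exp ((2 * π * v * γ : ℝ) * Complex.I) * φ v) t
      = FourierTransform.fourier φ (t - γ) := by
  rw [Real.fourier_real_eq_integral_exp_smul, Real.fourier_real_eq_integral_exp_smul]
  congr 1 with v
  rw [smul_eq_mul, smul_eq_mul, ← mul_assoc, ← Complex.exp_add]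
  congr 1
  push_cast
  ring

private lemma l_sum (S : Finset ℝ) (f : SchwartzMap ℝ ℂ) (t : ℝ) :
    FourierTransform.fourier
      (fun v => (∑ γ ∈ S, Complex.exp ((2 * π * v * γ : ℝ) * Complex.I)) * f v) t
    = ∑ γ ∈ S, FourierTransform.fourier (⇑f : ℝ → ℂ) (t - γ) := by
  have hterm : ∀ γ : ℝ, Integrable
      (fun v => Complex.exp ((2 * π * v * γ : ℝ) * Complex.I) * f v) := by
    intro γ
    refine f.integrable.bdd_mul (c := 1) ?_ (Filter.Eventually.of_forall fun v => ?_)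
    · exact (Complex.continuous_exp.comp (by continuity)).aestronglyMeasurable
    · rw [Complex.norm_exp_ofReal_mul_I]
  rw [Real.fourier_real_eq]
  have h1 : (∫ v : ℝ, Real.fourierChar (-(v * t)) •
        ((∑ γ ∈ S, Complex.exp ((2 * π * v * γ : ℝ) * Complex.I)) * f v))
      = ∫ v : ℝ, ∑ γ ∈ S, Real.fourierChar (-(v * t)) •
          (Complex.exp ((2 * π * v * γ : ℝ) * Complex.I) * f v) := by
    congr 1 with v
    rw [sum_mul, smul_sum]
  have hconv : ∀ γ ∈ S, Integrable (fun v : ℝ => Real.fourierChar (-(v * t)) •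
      (Complex.exp ((2 * π * v * γ : ℝ) * Complex.I) * f v)) volume :=
    fun γ _ => by
      have := (Real.fourierIntegral_convergent_iff t).2 (hterm γ)
      simp only [Real.inner_apply] at this
      exact this
  rw [h1, integral_finset_sum _ hconv]
  refine Finset.sum_congr rfl fun γ _ => ?_
  rw [← l_shift (⇑f) γ t, Real.fourier_real_eq]


private lemma pair_sum_eq (S : Finset ℝ) (K : ℝ → ℝ) (hK1 : Integrable K) :
    (∑ γ ∈ S, ∑ γ' ∈ S, FourierTransform.fourier (fun x : ℝ => (K x : ℂ)) (γ - γ')).re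
      = ∫ x : ℝ, K x * ‖∑ γ ∈ S, Complex.exp ((2 * π * x * γ : ℝ) * Complex.I)‖ ^ 2 := by
  set c : ℝ → ℂ := fun x => ∑ γ ∈ S, Complex.exp ((2 * π * x * γ : ℝ) * Complex.I) with hc
  have hterm : ∀ γ γ' : ℝ, Integrable
      (fun x : ℝ => Complex.exp ((-2 * π * x * (γ - γ') : ℝ) * Complex.I) * (K x : ℂ)) := by
    intro γ γ'
    refine (hK1.ofReal (𝕜 := ℂ)).bdd_mul (c := 1) ?_ (Filter.Eventually.of_forall fun x => ?_)
    · exact (Complex.continuous_exp.comp (by continuity)).aestronglyMeasurable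
    · rw [Complex.norm_exp_ofReal_mul_I]
  have h1 : ∀ γ γ' : ℝ, FourierTransform.fourier (fun x : ℝ => (K x : ℂ)) (γ - γ')
      = ∫ x : ℝ, Complex.exp ((-2 * π * x * (γ - γ') : ℝ) * Complex.I) * (K x : ℂ) := by
    intro γ γ'
    rw [Real.fourier_real_eq_integral_exp_smul]
    rfl
  have hpt : ∀ x : ℝ, (∑ γ ∈ S, ∑ γ' ∈ S,
        Complex.exp ((-2 * π * x * (γ - γ') : ℝ) * Complex.I) * (K x : ℂ))
      = ((K x * ‖c x‖ ^ 2 : ℝ) : ℂ) := by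
    intro x
    have hnc : ((‖c x‖ ^ 2 : ℝ) : ℂ) = (starRingEnd ℂ) (c x) * c x := by
      rw [Complex.conj_mul']
      push_cast
      ring
    rw [Complex.ofReal_mul, hnc, hc, Finset.sum_comm]
    simp only [map_sum, Finset.sum_mul, Finset.mul_sum]
    refine Finset.sum_congr rfl fun u _ => Finset.sum_congr rfl fun v _ => ?_
    have harg : ((-2 * π * x * (v - u) : ℝ) : ℂ) * Complex.I
        = -(((2 * π * x * v : ℝ) : ℂ) * Complex.I) + ((2 * π * x * u : ℝ) : ℂ) * Complex.I := by
      push_cast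
      ring
    rw [harg, Complex.exp_add, ← Complex.exp_conj, map_mul, Complex.conj_I,
      Complex.conj_ofReal, mul_neg]
    ring
  have h2 : (∑ γ ∈ S, ∑ γ' ∈ S, FourierTransform.fourier (fun x : ℝ => (K x : ℂ)) (γ - γ'))
      = ∫ x : ℝ, ((K x * ‖c x‖ ^ 2 : ℝ) : ℂ) := by
    simp_rw [h1]
    rw [Finset.sum_congr rfl fun γ (_ : γ ∈ S) =>
      (integral_finset_sum S (fun γ' _ => hterm γ γ')).symm]
    rw [← integral_finset_sum S (fun γ _ => integrable_finset_sum _ fun γ' _ => hterm γ γ')]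
    exact integral_congr_ae (Filter.Eventually.of_forall hpt)
  rw [h2]
  have hor : (∫ x : ℝ, ((K x * ‖c x‖ ^ 2 : ℝ) : ℂ))
      = ((∫ x : ℝ, K x * ‖c x‖ ^ 2 : ℝ) : ℂ) := integral_ofReal
  rw [hor, Complex.ofReal_re]

/-- mean square of a sum of shifted Fourier transforms is bounded by
the pair sum of the Fourier transform of a majorant `K` of `|f|²`. -/
theorem meansquare_le_pair_sum
    (S : Finset ℝ) (f : SchwartzMap ℝ ℂ) (K : ℝ → ℝ)
    (hK1 : MeasureTheory.Integrable K)
    (hK2 : ∀ v : ℝ, ‖f v‖ ^ 2 ≤ K v) :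
    (∫ t : ℝ, ‖∑ γ ∈ S, FourierTransform.fourier (⇑f : ℝ → ℂ) (t - γ)‖ ^ 2) ≤
      (∑ γ ∈ S, ∑ γ' ∈ S,
        FourierTransform.fourier (fun x : ℝ => (K x : ℂ)) (γ - γ')).re := by
  classical
  set c : ℝ → ℂ := fun x => ∑ γ ∈ S, Complex.exp ((2 * π * x * γ : ℝ) * Complex.I) with hc
  set g : ℝ → ℂ := fun v => c v * f v with hg
  set F : ℝ → ℂ := fun t => ∑ γ ∈ S, FourierTransform.fourier (⇑f : ℝ → ℂ) (t - γ) with hF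
  have hccont : Continuous c := by
    refine continuous_finset_sum _ fun γ _ => Complex.continuous_exp.comp (by continuity)
  have hcbd : ∀ x : ℝ, ‖c x‖ ≤ (S.card : ℝ) := by
    intro x
    calc ‖c x‖ ≤ ∑ γ ∈ S, ‖Complex.exp ((2 * π * x * γ : ℝ) * Complex.I)‖ :=
          norm_sum_le S _
      _ = ∑ γ ∈ S, 1 := by
          refine Finset.sum_congr rfl fun γ _ => Complex.norm_exp_ofReal_mul_I _
      _ = (S.card : ℝ) := by simp
  have hgcont : Continuous g := hccont.mul f.continuous
  have hgi : MeasureTheory.Integrable g :=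
    f.integrable.bdd_mul hccont.aestronglyMeasurable (Filter.Eventually.of_forall hcbd)
  have hFg : FourierTransform.fourier g = F := funext fun t => l_sum S f t
  have hf2 : MeasureTheory.Integrable (FourierTransform.fourier (⇑f : ℝ → ℂ)) := by
    have := (SchwartzMap.fourierTransformCLM ℂ f).integrable (μ := MeasureTheory.volume)
    rw [SchwartzMap.fourierTransformCLM_apply] at this; exact this
  have hFint : MeasureTheory.Integrable F := by
    rw [hF]
    exact MeasureTheory.integrable_finset_sum _ fun γ _ => hf2.comp_sub_right γ
  have hKc : MeasureTheory.Integrable (fun x : ℝ => K x * ‖c x‖ ^ 2) := by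
    have := hK1.bdd_mul (f := fun x => ‖c x‖ ^ 2) (c := (S.card : ℝ) ^ 2)
      ((hccont.norm.pow 2).aestronglyMeasurable)
      (Filter.Eventually.of_forall fun x => by
        rw [Real.norm_eq_abs, _root_.abs_of_nonneg (by positivity)]
        exact pow_le_pow_left₀ (norm_nonneg _) (hcbd x) 2)
    simpa [mul_comm] using this
  have hKnn : ∀ x : ℝ, 0 ≤ K x := fun x => (pow_two_nonneg ‖f x‖).trans (hK2 x)
  rw [pair_sum_eq S K hK1]
  by_cases hInt : MeasureTheory.Integrable (fun t : ℝ => ‖F t‖ ^ 2)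
  · -- main case
    have hFconj : MeasureTheory.Integrable (fun ξ : ℝ => (starRingEnd ℂ) (F ξ)) := by
      refine hFint.norm.mono' ?_ (Filter.Eventually.of_forall fun ξ => by simp)
      exact Complex.continuous_conj.comp_aestronglyMeasurable hFint.aestronglyMeasurable
    have key : (∫ t : ℝ, ‖F t‖ ^ 2) = ∫ x : ℝ, ‖g x‖ ^ 2 := by
      have e1 : (∫ t : ℝ, ‖F t‖ ^ 2)
          = (∫ t : ℝ, F t * (starRingEnd ℂ) (F t)).re := by
        have : (fun t : ℝ => F t * (starRingEnd ℂ) (F t))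
            = fun t : ℝ => ((‖F t‖ ^ 2 : ℝ) : ℂ) := by
          funext t
          rw [Complex.mul_conj']
          push_cast
          ring
        rw [this]
        have hor : (∫ t : ℝ, ((‖F t‖ ^ 2 : ℝ) : ℂ))
            = ((∫ t : ℝ, ‖F t‖ ^ 2 : ℝ) : ℂ) := integral_ofReal
        rw [hor, Complex.ofReal_re]
      have e2 : (∫ t : ℝ, F t * (starRingEnd ℂ) (F t))
          = ∫ x : ℝ, g x * (starRingEnd ℂ) (g x) := by
        have hGi : MeasureTheory.Integrable (FourierTransform.fourier g) := by
          rw [hFg]; exact hFint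
        rw [← hFg]
        rw [l_mult hgi (by rw [hFg]; exact hFconj)]
        refine MeasureTheory.integral_congr_ae (Filter.Eventually.of_forall fun x => ?_)
        show g x * FourierTransform.fourier
            (fun t => (starRingEnd ℂ) (FourierTransform.fourier g t)) x
          = g x * (starRingEnd ℂ) (g x)
        congr 1
        rw [l_conj]
        rw [hgi.fourierInv_fourier_eq hGi hgcont.continuousAt]
      have e3 : (∫ x : ℝ, g x * (starRingEnd ℂ) (g x)).re = ∫ x : ℝ, ‖g x‖ ^ 2 := by
        have : (fun x : ℝ => g x * (starRingEnd ℂ) (g x))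
            = fun x : ℝ => ((‖g x‖ ^ 2 : ℝ) : ℂ) := by
          funext x
          rw [Complex.mul_conj']
          push_cast
          ring
        rw [this]
        have hor : (∫ x : ℝ, ((‖g x‖ ^ 2 : ℝ) : ℂ))
            = ((∫ x : ℝ, ‖g x‖ ^ 2 : ℝ) : ℂ) := integral_ofReal
        rw [hor, Complex.ofReal_re]
      rw [e1, e2, e3]
    calc (∫ t : ℝ, ‖∑ γ ∈ S, FourierTransform.fourier (⇑f : ℝ → ℂ) (t - γ)‖ ^ 2)
        = ∫ x : ℝ, ‖g x‖ ^ 2 := key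
      _ ≤ ∫ x : ℝ, K x * ‖c x‖ ^ 2 := by
          have hLg : MeasureTheory.Integrable (fun x : ℝ => ‖g x‖ ^ 2) := by
            refine MeasureTheory.Integrable.mono' hKc
              ((hgcont.norm.pow 2).aestronglyMeasurable)
              (Filter.Eventually.of_forall fun x => ?_)
            rw [Real.norm_eq_abs, _root_.abs_of_nonneg (by positivity), hg]
            calc ‖c x * f x‖ ^ 2 = ‖f x‖ ^ 2 * ‖c x‖ ^ 2 := by
                  rw [norm_mul]; ring
              _ ≤ K x * ‖c x‖ ^ 2 :=
                  mul_le_mul_of_nonneg_right (hK2 x) (by positivity)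
          refine MeasureTheory.integral_mono hLg hKc fun x => ?_
          calc ‖g x‖ ^ 2 = ‖f x‖ ^ 2 * ‖c x‖ ^ 2 := by
                rw [hg]; simp [norm_mul]; ring
            _ ≤ K x * ‖c x‖ ^ 2 :=
                mul_le_mul_of_nonneg_right (hK2 x) (by positivity)
  · -- degenerate case: the left integral is zero
    rw [MeasureTheory.integral_undef hInt]
    exact MeasureTheory.integral_nonneg fun x => mul_nonneg (hKnn x) (by positivity)
end

section
/- Let N be a positive integer and a : \{1, ..., N\} \to \mathbb{C} an arbitrary sequence. For each \ell \le N define y(\ell) = \sum_{d \le N/\ell} a(d\ell)/d (and y(\ell) = 0 for \ell > N). Then \sum_{d, e \le N} a(d) \overline{a(e)} / \mathrm{lcm}(d,e) = \sum_{\ell \le N} (\varphi(\ell)/\ell^2) |y(\ell)|^2. -/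
open Finset

lemma gcd_eq_sum_totient (N d e : ℕ) (hd : d ∈ Finset.Icc 1 N) (he : e ∈ Finset.Icc 1 N) :
    ((Nat.gcd d e : ℕ) : ℂ) =
      ∑ ℓ ∈ Finset.Icc 1 N, if ℓ ∣ d ∧ ℓ ∣ e then (Nat.totient ℓ : ℂ) else 0 := by
  simp only [Finset.mem_Icc] at hd he
  have hdpos : 0 < d := hd.1
  have hg : 0 < Nat.gcd d e := Nat.gcd_pos_of_pos_left e hdpos
  have hgN : Nat.gcd d e ≤ N := le_trans (Nat.gcd_le_left e hdpos) hd.2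
  rw [← Finset.sum_filter]
  have hset : (Finset.Icc 1 N).filter (fun ℓ => ℓ ∣ d ∧ ℓ ∣ e) = (Nat.gcd d e).divisors := by
    ext ℓ
    simp only [Finset.mem_filter, Finset.mem_Icc, Nat.mem_divisors]
    constructor
    · rintro ⟨_, h1, h2⟩
      exact ⟨Nat.dvd_gcd h1 h2, hg.ne'⟩
    · rintro ⟨h, -⟩
      exact ⟨⟨Nat.one_le_iff_ne_zero.2 (fun h0 => by simp [h0] at h; omega),
        le_trans (Nat.le_of_dvd hg h) hgN⟩,
        h.trans (Nat.gcd_dvd_left d e), h.trans (Nat.gcd_dvd_right d e)⟩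
  rw [hset]
  rw_mod_cast [Nat.sum_totient]

lemma reindex (N ℓ : ℕ) (hℓ : 1 ≤ ℓ) (f : ℕ → ℂ) :
    ∑ d ∈ (Finset.Icc 1 N).filter (ℓ ∣ ·), f d = ∑ m ∈ Finset.Icc 1 (N / ℓ), f (m * ℓ) := by
  apply Finset.sum_nbij' (fun d => d / ℓ) (fun m => m * ℓ)
  · intro d hd
    simp only [Finset.mem_filter, Finset.mem_Icc] at hd
    obtain ⟨⟨h1, h2⟩, hdvd⟩ := hd
    simp only [Finset.mem_Icc]
    exact ⟨Nat.one_le_div_iff hℓ |>.2 (Nat.le_of_dvd h1 hdvd), Nat.div_le_div_right h2⟩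
  · intro m hm
    simp only [Finset.mem_Icc] at hm
    simp only [Finset.mem_filter, Finset.mem_Icc]
    refine ⟨⟨by nlinarith [hm.1], ?_⟩, Dvd.intro_left m rfl⟩
    exact (Nat.le_div_iff_mul_le hℓ).1 hm.2
  · intro d hd
    simp only [Finset.mem_filter] at hd
    exact Nat.div_mul_cancel hd.2
  · intro m hm
    exact Nat.mul_div_cancel_left m (show 0 < ℓ by omega) ▸ by rw [Nat.mul_comm, Nat.mul_div_cancel_left _ (show 0 < ℓ by omega)]
  · intro d hd
    simp only [Finset.mem_filter] at hd
    rw [Nat.div_mul_cancel hd.2]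

/-- diagonalization of the quadratic form `∑ a(d) conj(a(e))/lcm(d,e)`. -/
theorem quadratic_form_diagonalization (N : ℕ) (hN : 0 < N) (a : ℕ → ℂ) :
    (∑ d ∈ Finset.Icc 1 N, ∑ e ∈ Finset.Icc 1 N,
        a d * (starRingEnd ℂ) (a e) / (Nat.lcm d e : ℂ)) =
      ∑ ℓ ∈ Finset.Icc 1 N, ((Nat.totient ℓ : ℂ) / (ℓ : ℂ) ^ 2) *
        ((‖∑ d ∈ Finset.Icc 1 (N / ℓ), a (d * ℓ) / (d : ℂ)‖ ^ 2 : ℝ) : ℂ) := by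
  calc
    (∑ d ∈ Finset.Icc 1 N, ∑ e ∈ Finset.Icc 1 N,
        a d * (starRingEnd ℂ) (a e) / (Nat.lcm d e : ℂ))
      = ∑ d ∈ Finset.Icc 1 N, ∑ e ∈ Finset.Icc 1 N,
        (a d / d) * ((starRingEnd ℂ) (a e) / e) * ((Nat.gcd d e : ℕ) : ℂ) := by
        refine Finset.sum_congr rfl fun d hd => Finset.sum_congr rfl fun e he => ?_
        simp only [Finset.mem_Icc] at hd he
        have hd0 : (d : ℂ) ≠ 0 := Nat.cast_ne_zero.2 (by omega)
        have he0 : (e : ℂ) ≠ 0 := Nat.cast_ne_zero.2 (by omega)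
        have hl0 : (Nat.lcm d e : ℂ) ≠ 0 := Nat.cast_ne_zero.2
          (Nat.lcm_ne_zero (by omega) (by omega))
        have h : (Nat.gcd d e : ℂ) * (Nat.lcm d e : ℂ) = (d : ℂ) * e := by
          exact_mod_cast congrArg (Nat.cast (R := ℂ)) (Nat.gcd_mul_lcm d e)
        field_simp
        linear_combination (-(a d * (starRingEnd ℂ) (a e))) * h
    _ = ∑ d ∈ Finset.Icc 1 N, ∑ e ∈ Finset.Icc 1 N, ∑ ℓ ∈ Finset.Icc 1 N,
        (if ℓ ∣ d then a d / d else 0) * (if ℓ ∣ e then (starRingEnd ℂ) (a e) / e else 0)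
          * (Nat.totient ℓ : ℂ) := by
        refine Finset.sum_congr rfl fun d hd => Finset.sum_congr rfl fun e he => ?_
        rw [gcd_eq_sum_totient N d e hd he, Finset.mul_sum]
        refine Finset.sum_congr rfl fun ℓ hℓ => ?_
        by_cases h1 : ℓ ∣ d <;> by_cases h2 : ℓ ∣ e <;>
          simp [h1, h2] <;> ring
    _ = ∑ ℓ ∈ Finset.Icc 1 N,
        (∑ d ∈ Finset.Icc 1 N, if ℓ ∣ d then a d / d else 0) *
        (∑ e ∈ Finset.Icc 1 N, if ℓ ∣ e then (starRingEnd ℂ) (a e) / e else 0)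
          * (Nat.totient ℓ : ℂ) := by
        have step1 : (∑ d ∈ Finset.Icc 1 N, ∑ e ∈ Finset.Icc 1 N, ∑ ℓ ∈ Finset.Icc 1 N,
            (if ℓ ∣ d then a d / d else 0) * (if ℓ ∣ e then (starRingEnd ℂ) (a e) / e else 0)
              * (Nat.totient ℓ : ℂ)) =
            ∑ ℓ ∈ Finset.Icc 1 N, ∑ d ∈ Finset.Icc 1 N, ∑ e ∈ Finset.Icc 1 N,
            (if ℓ ∣ d then a d / d else 0) * (if ℓ ∣ e then (starRingEnd ℂ) (a e) / e else 0)
              * (Nat.totient ℓ : ℂ) := by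
          rw [show (∑ d ∈ Finset.Icc 1 N, ∑ e ∈ Finset.Icc 1 N, ∑ ℓ ∈ Finset.Icc 1 N,
            (if ℓ ∣ d then a d / d else 0) * (if ℓ ∣ e then (starRingEnd ℂ) (a e) / e else 0)
              * (Nat.totient ℓ : ℂ)) = ∑ d ∈ Finset.Icc 1 N, ∑ ℓ ∈ Finset.Icc 1 N,
              ∑ e ∈ Finset.Icc 1 N,
            (if ℓ ∣ d then a d / d else 0) * (if ℓ ∣ e then (starRingEnd ℂ) (a e) / e else 0)
              * (Nat.totient ℓ : ℂ) from Finset.sum_congr rfl fun d _ => Finset.sum_comm]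
          exact Finset.sum_comm
        rw [step1]
        refine Finset.sum_congr rfl fun ℓ hℓ => ?_
        rw [Finset.sum_mul_sum, Finset.sum_mul]
        refine Finset.sum_congr rfl fun d hd => ?_
        rw [Finset.sum_mul]
    _ = ∑ ℓ ∈ Finset.Icc 1 N, ((Nat.totient ℓ : ℂ) / (ℓ : ℂ) ^ 2) *
        ((‖∑ d ∈ Finset.Icc 1 (N / ℓ), a (d * ℓ) / (d : ℂ)‖ ^ 2 : ℝ) : ℂ) := by
        refine Finset.sum_congr rfl fun ℓ hℓ => ?_
        simp only [Finset.mem_Icc] at hℓ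
        have hℓ0 : (ℓ : ℂ) ≠ 0 := Nat.cast_ne_zero.2 (by omega)
        set y : ℂ := ∑ d ∈ Finset.Icc 1 (N / ℓ), a (d * ℓ) / (d : ℂ) with hy
        have hS : (∑ d ∈ Finset.Icc 1 N, if ℓ ∣ d then a d / d else 0) = y / ℓ := by
          rw [← Finset.sum_filter, reindex N ℓ hℓ.1 (fun d => a d / d), hy, Finset.sum_div]
          refine Finset.sum_congr rfl fun m hm => ?_
          push_cast
          rw [div_div]
        have hSc : (∑ e ∈ Finset.Icc 1 N, if ℓ ∣ e then (starRingEnd ℂ) (a e) / e else 0)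
            = (starRingEnd ℂ) (y / ℓ) := by
          rw [← hS, map_sum]
          refine Finset.sum_congr rfl fun e he => ?_
          by_cases h : ℓ ∣ e <;> simp [h]
        rw [hS, hSc]
        have h1 : (starRingEnd ℂ) (y / ℓ) = (starRingEnd ℂ) y / ℓ := by
          rw [map_div₀, Complex.conj_natCast]
        have h2 : ((‖y‖ ^ 2 : ℝ) : ℂ) = y * (starRingEnd ℂ) y := by
          rw [Complex.mul_conj]
          norm_cast
          rw [Complex.normSq_eq_norm_sq]
        rw [h1, h2]
        field_simp
end

section
/- Let N \ge 1 and G = \sum_{n \le N} \mu(n)^2 / \varphi(n). For any complex sequence (a(n))_{n \le N} with a(1) = 1, one has \sum_{d, e \le N} a(d)\overline{a(e)}/\mathrm{lcm}(d,e) \ge 1/G, with equality attainable. -/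
open Finset ArithmeticFunction
open scoped ArithmeticFunction.Moebius

private lemma qfm_moebius_delta (n : ℕ) :
    ∑ d ∈ n.divisors, (μ d : ℤ) = if n = 1 then 1 else 0 := by
  rw [← coe_mul_zeta_apply, moebius_mul_coe_zeta, one_apply]

/-- gcd as a sum of totients over common divisors. -/
private lemma qfm_gcd_eq (N d e : ℕ) (hd : d ∈ Finset.Icc 1 N) (he : e ∈ Finset.Icc 1 N) :
    ((Nat.gcd d e : ℂ)) = ∑ ℓ ∈ Finset.Icc 1 N,
      if ℓ ∣ d ∧ ℓ ∣ e then (Nat.totient ℓ : ℂ) else 0 := by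
  simp only [mem_Icc] at hd he
  have hfil : (Finset.Icc 1 N).filter (fun ℓ => ℓ ∣ d ∧ ℓ ∣ e) = (Nat.gcd d e).divisors := by
    ext ℓ
    simp only [mem_filter, mem_Icc, Nat.mem_divisors, Nat.dvd_gcd_iff]
    constructor
    · rintro ⟨_, h⟩
      exact ⟨h, Nat.gcd_ne_zero_left (by omega)⟩
    · rintro ⟨⟨h1, h2⟩, -⟩
      have hℓ0 : ℓ ≠ 0 := by
        rintro rfl
        have := Nat.eq_zero_of_zero_dvd h1
        omega
      exact ⟨⟨Nat.one_le_iff_ne_zero.2 hℓ0,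
        le_trans (Nat.le_of_dvd (by omega) h1) hd.2⟩, h1, h2⟩
  rw [← Finset.sum_filter, hfil]
  rw [show ∑ ℓ ∈ (Nat.gcd d e).divisors, ((Nat.totient ℓ : ℂ))
      = (((∑ ℓ ∈ (Nat.gcd d e).divisors, Nat.totient ℓ : ℕ)) : ℂ) by push_cast; rfl]
  rw [Nat.sum_totient]

/-- Diagonalization of the quadratic form. -/
private lemma qfm_diag (N : ℕ) (a : ℕ → ℂ) :
    (∑ d ∈ Finset.Icc 1 N, ∑ e ∈ Finset.Icc 1 N,
        a d * (starRingEnd ℂ) (a e) / (Nat.lcm d e : ℂ))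
      = ∑ ℓ ∈ Finset.Icc 1 N,
          ((∑ d ∈ Finset.Icc 1 N, if ℓ ∣ d then a d / d else 0) *
            (starRingEnd ℂ) (∑ e ∈ Finset.Icc 1 N, if ℓ ∣ e then a e / e else 0)) *
              (Nat.totient ℓ : ℂ) := by
  have step : ∀ d ∈ Finset.Icc 1 N, ∀ e ∈ Finset.Icc 1 N,
      a d * (starRingEnd ℂ) (a e) / (Nat.lcm d e : ℂ)
        = ∑ ℓ ∈ Finset.Icc 1 N,
            ((if ℓ ∣ d then a d / d else 0) * (starRingEnd ℂ) (if ℓ ∣ e then a e / e else 0)) *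
              (Nat.totient ℓ : ℂ) := by
    intro d hd e he
    simp only [mem_Icc] at hd he
    have key : ∀ ℓ : ℕ,
        ((if ℓ ∣ d then a d / d else 0) * (starRingEnd ℂ) (if ℓ ∣ e then a e / e else 0)) *
          (Nat.totient ℓ : ℂ)
        = (if ℓ ∣ d ∧ ℓ ∣ e then (Nat.totient ℓ : ℂ) else 0) *
            (a d / d * (starRingEnd ℂ) (a e / e)) := by
      intro ℓ
      by_cases h1 : ℓ ∣ d <;> by_cases h2 : ℓ ∣ e <;> simp [h1, h2] <;> ring
    rw [Finset.sum_congr rfl (fun ℓ _ => key ℓ), ← Finset.sum_mul,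
      ← qfm_gcd_eq N d e (by simp [mem_Icc]; omega) (by simp [mem_Icc]; omega)]
    have hd0 : (d : ℂ) ≠ 0 := Nat.cast_ne_zero.2 (by omega)
    have he0 : (e : ℂ) ≠ 0 := Nat.cast_ne_zero.2 (by omega)
    have hl0 : ((Nat.lcm d e : ℕ) : ℂ) ≠ 0 :=
      Nat.cast_ne_zero.2 (Nat.lcm_ne_zero (by omega) (by omega))
    have hge : ((Nat.gcd d e : ℕ) : ℂ) * ((Nat.lcm d e : ℕ) : ℂ) = (d : ℂ) * e := by
      rw [← Nat.cast_mul, Nat.gcd_mul_lcm, Nat.cast_mul]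
    rw [map_div₀, map_natCast]
    field_simp
    linear_combination (-(a d * (starRingEnd ℂ) (a e))) * hge
  rw [Finset.sum_congr rfl (fun d hd => Finset.sum_congr rfl (fun e he => step d hd e he))]
  rw [Finset.sum_congr rfl (fun d _ => Finset.sum_comm (s := Finset.Icc 1 N)
    (t := Finset.Icc 1 N)), Finset.sum_comm]
  refine Finset.sum_congr rfl fun ℓ _ => ?_
  rw [map_sum, Finset.sum_mul_sum, Finset.sum_mul]
  refine Finset.sum_congr rfl fun d _ => ?_
  rw [Finset.sum_mul]

/-- Constraint: the linear form in the `Y ℓ` equals `a 1`. -/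
private lemma qfm_constraint (N : ℕ) (hN : 1 ≤ N) (a : ℕ → ℂ) (ha : a 1 = 1) :
    ∑ ℓ ∈ Finset.Icc 1 N, (μ ℓ : ℂ) *
      (∑ d ∈ Finset.Icc 1 N, if ℓ ∣ d then a d / d else 0) = 1 := by
  have swap : ∑ ℓ ∈ Finset.Icc 1 N, (μ ℓ : ℂ) *
      (∑ d ∈ Finset.Icc 1 N, if ℓ ∣ d then a d / d else 0)
      = ∑ d ∈ Finset.Icc 1 N,
          (∑ ℓ ∈ Finset.Icc 1 N, if ℓ ∣ d then (μ ℓ : ℂ) else 0) * (a d / d) := by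
    simp_rw [Finset.mul_sum, mul_ite, mul_zero, Finset.sum_mul, ite_mul, zero_mul]
    exact Finset.sum_comm
  rw [swap]
  have hdiv : ∀ d ∈ Finset.Icc 1 N,
      (∑ ℓ ∈ Finset.Icc 1 N, if ℓ ∣ d then (μ ℓ : ℂ) else 0) * (a d / d)
        = (if d = 1 then 1 else 0) * (a d / d) := by
    intro d hd
    simp only [mem_Icc] at hd
    congr 1
    rw [← Finset.sum_filter]
    have hfil : (Finset.Icc 1 N).filter (· ∣ d) = d.divisors := by
      ext ℓ
      simp only [mem_filter, mem_Icc, Nat.mem_divisors]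
      constructor
      · rintro ⟨_, h⟩; exact ⟨h, by omega⟩
      · rintro ⟨h, -⟩
        have hℓ0 : ℓ ≠ 0 := by
          rintro rfl
          have := Nat.eq_zero_of_zero_dvd h
          omega
        exact ⟨⟨Nat.one_le_iff_ne_zero.2 hℓ0,
          le_trans (Nat.le_of_dvd (by omega) h) hd.2⟩, h⟩
    rw [hfil]
    have h := qfm_moebius_delta d
    have h2 : ((∑ ℓ ∈ d.divisors, (μ ℓ : ℤ) : ℤ) : ℂ) = (((if d = 1 then 1 else 0 : ℤ)) : ℂ) :=
      congrArg _ h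
    push_cast at h2
    rw [h2]
  rw [Finset.sum_congr rfl hdiv]
  rw [Finset.sum_eq_single 1 (fun b _ hb => by simp [hb])
    (fun h => absurd (by simp [mem_Icc, hN] : (1 : ℕ) ∈ Finset.Icc 1 N) h)]
  simp [ha]

/-- Möbius inversion delta. -/
private lemma qfm_inv (N ℓ m : ℕ) (hℓ : ℓ ∈ Finset.Icc 1 N) (hm : m ∈ Finset.Icc 1 N) :
    ∑ d ∈ Finset.Icc 1 N, (if ℓ ∣ d ∧ d ∣ m then ((μ (m / d) : ℝ)) else 0)
      = if m = ℓ then 1 else 0 := by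
  simp only [mem_Icc] at hℓ hm
  rw [← Finset.sum_filter]
  by_cases hlm : ℓ ∣ m
  · have hml : m / ℓ ≠ 0 := by
      have := Nat.div_pos (Nat.le_of_dvd (by omega) hlm) (by omega)
      omega
    have hfil : (Finset.Icc 1 N).filter (fun d => ℓ ∣ d ∧ d ∣ m)
        = (m / ℓ).divisors.image (fun k => ℓ * k) := by
      ext d
      simp only [mem_filter, mem_Icc, Nat.mem_divisors, Finset.mem_image]
      constructor
      · rintro ⟨⟨hd1, hd2⟩, ⟨⟨k, rfl⟩, hdm⟩⟩
        exact ⟨k, ⟨(Nat.dvd_div_iff_mul_dvd hlm).2 hdm, hml⟩, rfl⟩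
      · rintro ⟨k, ⟨hk, -⟩, rfl⟩
        have hdm : ℓ * k ∣ m := (Nat.dvd_div_iff_mul_dvd hlm).1 hk
        have hk0 : k ≠ 0 := by
          rintro rfl
          exact hml (Nat.eq_zero_of_zero_dvd hk)
        exact ⟨⟨Nat.one_le_iff_ne_zero.2 (Nat.mul_ne_zero (by omega) hk0),
          le_trans (Nat.le_of_dvd (by omega) hdm) hm.2⟩,
          ⟨Dvd.intro k rfl, hdm⟩⟩
    rw [hfil, Finset.sum_image (fun x _ y _ h => Nat.eq_of_mul_eq_mul_left (by omega) h)]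
    rw [Finset.sum_congr rfl (fun k _ => by rw [Nat.div_div_eq_div_mul] :
      ∀ k ∈ (m / ℓ).divisors, ((μ (m / (ℓ * k)) : ℝ)) = ((μ (m / ℓ / k) : ℝ)))]
    rw [Nat.sum_div_divisors (m / ℓ) (fun k => ((μ k : ℝ)))]
    have h := qfm_moebius_delta (m / ℓ)
    have h2 : ((∑ k ∈ (m / ℓ).divisors, (μ k : ℤ) : ℤ) : ℝ)
        = (((if m / ℓ = 1 then 1 else 0 : ℤ)) : ℝ) := congrArg _ h
    push_cast at h2
    rw [h2]
    have hiff : m / ℓ = 1 ↔ m = ℓ := by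
      constructor
      · intro h1
        have h3 := Nat.mul_div_cancel' hlm
        rw [h1, mul_one] at h3
        omega
      · rintro rfl
        exact Nat.div_self (by omega)
    simp [hiff, eq_comm]
  · rw [Finset.filter_false_of_mem, Finset.sum_empty]
    · have hne : m ≠ ℓ := by rintro rfl; exact hlm dvd_rfl
      simp [hne]
    · rintro d hd ⟨h1, h2⟩
      exact hlm (dvd_trans h1 h2)

private lemma qfm_cast_ite_sum (s : Finset ℕ) (P : ℕ → Prop) [DecidablePred P] (r : ℕ → ℝ) :
    ∑ d ∈ s, (if P d then ((r d : ℝ) : ℂ) else 0)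
      = (((∑ d ∈ s, if P d then r d else 0 : ℝ)) : ℂ) := by
  rw [Complex.ofReal_sum]
  refine Finset.sum_congr rfl fun d _ => ?_
  split <;> simp

/-- the mollifier quadratic form is at least `1/G`,
with `G = ∑_{n ≤ N} μ(n)²/φ(n)`, and this bound is attained. -/
theorem quadratic_form_min (N : ℕ) (hN : 1 ≤ N) :
    (∀ a : ℕ → ℂ, a 1 = 1 →
      1 / (∑ n ∈ Finset.Icc 1 N, (ArithmeticFunction.moebius n : ℝ) ^ 2 / Nat.totient n) ≤
        (∑ d ∈ Finset.Icc 1 N, ∑ e ∈ Finset.Icc 1 N,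
          a d * (starRingEnd ℂ) (a e) / (Nat.lcm d e : ℂ)).re) ∧
    ∃ a : ℕ → ℂ, a 1 = 1 ∧
      (∑ d ∈ Finset.Icc 1 N, ∑ e ∈ Finset.Icc 1 N,
          a d * (starRingEnd ℂ) (a e) / (Nat.lcm d e : ℂ)).re =
        1 / (∑ n ∈ Finset.Icc 1 N, (ArithmeticFunction.moebius n : ℝ) ^ 2 / Nat.totient n) := by
  set G : ℝ := ∑ n ∈ Finset.Icc 1 N, (μ n : ℝ) ^ 2 / Nat.totient n with hGdef
  have hG1 : (1 : ℝ) ≤ G := by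
    have h1 : ((μ 1 : ℝ)) ^ 2 / ((Nat.totient 1 : ℕ) : ℝ) = 1 := by simp
    calc (1 : ℝ) = (μ 1 : ℝ) ^ 2 / ((Nat.totient 1 : ℕ) : ℝ) := h1.symm
      _ ≤ G := Finset.single_le_sum (f := fun n => (μ n : ℝ) ^ 2 / Nat.totient n)
          (fun n _ => div_nonneg (sq_nonneg _) (Nat.cast_nonneg _)) (by simp [mem_Icc, hN])
  have hG : (0 : ℝ) < G := lt_of_lt_of_le one_pos hG1
  constructor
  · -- lower bound
    intro a ha
    have hre : (∑ d ∈ Finset.Icc 1 N, ∑ e ∈ Finset.Icc 1 N,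
          a d * (starRingEnd ℂ) (a e) / (Nat.lcm d e : ℂ)).re
        = ∑ ℓ ∈ Finset.Icc 1 N, Complex.normSq
            (∑ d ∈ Finset.Icc 1 N, if ℓ ∣ d then a d / d else 0) * (Nat.totient ℓ : ℝ) := by
      rw [qfm_diag N a, Complex.re_sum]
      refine Finset.sum_congr rfl fun ℓ _ => ?_
      rw [Complex.mul_conj]
      simp [Complex.mul_re]
    rw [hre]
    have hc := qfm_constraint N hN a ha
    set Y : ℕ → ℂ := fun ℓ => ∑ d ∈ Finset.Icc 1 N, if ℓ ∣ d then a d / d else 0 with hY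
    have h1 : (1 : ℝ) ≤ ∑ ℓ ∈ Finset.Icc 1 N, |(μ ℓ : ℝ)| * ‖Y ℓ‖ := by
      calc (1 : ℝ) = ‖∑ ℓ ∈ Finset.Icc 1 N, (μ ℓ : ℂ) * Y ℓ‖ := by
            rw [hc]; simp
        _ ≤ ∑ ℓ ∈ Finset.Icc 1 N, ‖(μ ℓ : ℂ) * Y ℓ‖ :=
            norm_sum_le _ _
        _ = ∑ ℓ ∈ Finset.Icc 1 N, |(μ ℓ : ℝ)| * ‖Y ℓ‖ := by
            refine Finset.sum_congr rfl fun ℓ _ => ?_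
            rw [norm_mul]
            congr 1
            rw [show ((μ ℓ : ℂ)) = (((μ ℓ : ℝ)) : ℂ) by push_cast; rfl, Complex.norm_real, Real.norm_eq_abs]
    have hcs := Finset.sum_mul_sq_le_sq_mul_sq (Finset.Icc 1 N)
      (fun ℓ => |(μ ℓ : ℝ)| / Real.sqrt (Nat.totient ℓ))
      (fun ℓ => Real.sqrt (Nat.totient ℓ) * ‖Y ℓ‖)
    have hfg : ∀ ℓ ∈ Finset.Icc 1 N,
        (|(μ ℓ : ℝ)| / Real.sqrt (Nat.totient ℓ)) * (Real.sqrt (Nat.totient ℓ) * ‖Y ℓ‖)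
          = |(μ ℓ : ℝ)| * ‖Y ℓ‖ := by
      intro ℓ hℓ
      simp only [mem_Icc] at hℓ
      have hφ : (0 : ℝ) < (Nat.totient ℓ : ℝ) := by
        exact_mod_cast Nat.totient_pos.2 (by omega)
      have hs : Real.sqrt (Nat.totient ℓ) ≠ 0 := ne_of_gt (Real.sqrt_pos.2 hφ)
      field_simp
    have hf2 : ∀ ℓ ∈ Finset.Icc 1 N,
        (|(μ ℓ : ℝ)| / Real.sqrt (Nat.totient ℓ)) ^ 2 = (μ ℓ : ℝ) ^ 2 / (Nat.totient ℓ : ℝ) := by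
      intro ℓ _
      rw [div_pow, sq_abs, Real.sq_sqrt (Nat.cast_nonneg _)]
    have hg2 : ∀ ℓ ∈ Finset.Icc 1 N,
        (Real.sqrt (Nat.totient ℓ) * ‖Y ℓ‖) ^ 2
          = Complex.normSq (Y ℓ) * (Nat.totient ℓ : ℝ) := by
      intro ℓ _
      rw [mul_pow, Real.sq_sqrt (Nat.cast_nonneg _), Complex.sq_norm]
      ring
    rw [Finset.sum_congr rfl hfg, Finset.sum_congr rfl hf2, Finset.sum_congr rfl hg2] at hcs
    have hT0 : (0 : ℝ) ≤ ∑ ℓ ∈ Finset.Icc 1 N, |(μ ℓ : ℝ)| * ‖Y ℓ‖ :=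
      Finset.sum_nonneg fun ℓ _ => mul_nonneg (abs_nonneg _) (norm_nonneg _)
    rw [div_le_iff₀ hG]
    nlinarith [hcs, h1, hT0]
  · -- the extremal sequence
    set yy : ℕ → ℝ := fun ℓ => (μ ℓ : ℝ) / (Nat.totient ℓ * G) with hyy
    set b : ℕ → ℝ := fun d =>
      (d : ℝ) * ∑ m ∈ Finset.Icc 1 N, (if d ∣ m then (μ (m / d) : ℝ) * yy m else 0) with hb
    refine ⟨fun d => ((b d : ℝ) : ℂ), ?_, ?_⟩
    · -- a 1 = 1
      have : b 1 = 1 := by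
        rw [hb]
        simp only [Nat.cast_one, one_mul, Nat.div_one, one_dvd, if_true]
        have : ∀ m ∈ Finset.Icc 1 N, (μ m : ℝ) * yy m = ((μ m : ℝ) ^ 2 / Nat.totient m) / G :=
          fun m _ => by rw [hyy]; ring
        rw [Finset.sum_congr rfl this, ← Finset.sum_div, ← hGdef, div_self hG.ne']
      show ((b 1 : ℝ) : ℂ) = 1
      rw [this]
      norm_num
    · -- value of the quadratic form
      have hYb : ∀ ℓ ∈ Finset.Icc 1 N,
          (∑ d ∈ Finset.Icc 1 N, if ℓ ∣ d then ((b d : ℝ) : ℂ) / d else 0)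
            = ((yy ℓ : ℝ) : ℂ) := by
        intro ℓ hℓ
        have hbd : ∀ d ∈ Finset.Icc 1 N,
            b d / (d : ℝ) = ∑ m ∈ Finset.Icc 1 N, (if d ∣ m then (μ (m / d) : ℝ) * yy m else 0) := by
          intro d hd
          simp only [mem_Icc] at hd
          rw [hb]
          rw [mul_div_cancel_left₀ _ (by exact_mod_cast (by omega : d ≠ 0) : (d : ℝ) ≠ 0)]
        have step1 : ∀ d ∈ Finset.Icc 1 N,
            (if ℓ ∣ d then ((b d : ℝ) : ℂ) / d else 0)
              = (((if ℓ ∣ d then b d / d else 0 : ℝ)) : ℂ) := by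
          intro d _
          split <;> simp
        rw [Finset.sum_congr rfl step1, ← Complex.ofReal_sum]
        congr 1
        calc ∑ d ∈ Finset.Icc 1 N, (if ℓ ∣ d then b d / (d : ℝ) else 0)
            = ∑ d ∈ Finset.Icc 1 N, ∑ m ∈ Finset.Icc 1 N,
                (if ℓ ∣ d ∧ d ∣ m then (μ (m / d) : ℝ) * yy m else 0) := by
              refine Finset.sum_congr rfl fun d hd => ?_
              by_cases h : ℓ ∣ d
              · rw [if_pos h, hbd d hd]
                refine Finset.sum_congr rfl fun m _ => ?_
                simp [h]
              · rw [if_neg h]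
                symm
                refine Finset.sum_eq_zero fun m _ => ?_
                rw [if_neg (fun hc => h hc.1)]
          _ = ∑ m ∈ Finset.Icc 1 N,
                (∑ d ∈ Finset.Icc 1 N, (if ℓ ∣ d ∧ d ∣ m then (μ (m / d) : ℝ) else 0)) * yy m := by
              rw [Finset.sum_comm]
              refine Finset.sum_congr rfl fun m _ => ?_
              rw [Finset.sum_mul]
              refine Finset.sum_congr rfl fun d _ => ?_
              rw [ite_mul, zero_mul]
          _ = ∑ m ∈ Finset.Icc 1 N, (if m = ℓ then 1 else 0) * yy m := by
              refine Finset.sum_congr rfl fun m hm => ?_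
              rw [qfm_inv N ℓ m hℓ hm]
          _ = yy ℓ := by
              simp only [ite_mul, zero_mul, one_mul]
              rw [Finset.sum_ite_eq' (Finset.Icc 1 N) ℓ yy, if_pos hℓ]
      rw [qfm_diag N]
      beta_reduce
      rw [Finset.sum_congr rfl (fun ℓ hℓ => by rw [hYb ℓ hℓ])]
      have hterm : ∀ ℓ ∈ Finset.Icc 1 N,
          (((yy ℓ : ℝ) : ℂ) * (starRingEnd ℂ) ((yy ℓ : ℝ) : ℂ)) * (Nat.totient ℓ : ℂ)
            = (((yy ℓ ^ 2 * Nat.totient ℓ : ℝ)) : ℂ) := by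
        intro ℓ _
        rw [Complex.conj_ofReal]
        push_cast
        ring
      rw [Finset.sum_congr rfl hterm, ← Complex.ofReal_sum, Complex.ofReal_re]
      have hval : ∀ ℓ ∈ Finset.Icc 1 N,
          yy ℓ ^ 2 * (Nat.totient ℓ : ℝ) = ((μ ℓ : ℝ) ^ 2 / Nat.totient ℓ) / G ^ 2 := by
        intro ℓ hℓ
        simp only [mem_Icc] at hℓ
        have hφ : (0 : ℝ) < (Nat.totient ℓ : ℝ) := by
          exact_mod_cast Nat.totient_pos.2 (by omega)
        rw [hyy]
        field_simp
      rw [Finset.sum_congr rfl hval, ← Finset.sum_div, ← hGdef, pow_two, ← div_div,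
        div_self hG.ne']
end

section
/- Let N \ge 1, G = \sum_{n \le N} \mu(n)^2/\varphi(n), and let a : \{1,...,N\} \to \mathbb{C} satisfy a(1) = 1. With y(\ell) = \sum_{d \le N/\ell} a(d\ell)/d and z(\ell) = (\mu(\ell)/G) \cdot \ell/\varphi(\ell), one has the exact identity: \sum_{d,e \le N} a(d)\overline{a(e)}/\mathrm{lcm}(d,e) = 1/G + \sum_{\ell \le N} (\varphi(\ell)/\ell^2) |y(\ell) - z(\ell)|^2. -/
open Finset ArithmeticFunction

lemma swap_sum {M : Type*} [AddCommMonoid M] (N : ℕ) (f : ℕ → ℕ → M) :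
    ∑ ℓ ∈ Icc 1 N, ∑ d ∈ Icc 1 (N / ℓ), f ℓ (d * ℓ)
      = ∑ n ∈ Icc 1 N, ∑ ℓ ∈ n.divisors, f ℓ n := by
  rw [Finset.sum_sigma', Finset.sum_sigma']
  refine Finset.sum_nbij' (fun p => ⟨p.2 * p.1, p.1⟩) (fun p => ⟨p.2, p.1 / p.2⟩) ?_ ?_ ?_ ?_ ?_
  · rintro ⟨ℓ, d⟩ hp
    simp only [Finset.mem_sigma, Finset.mem_Icc, Nat.mem_divisors] at hp ⊢
    obtain ⟨⟨hℓ1, hℓN⟩, hd1, hdN⟩ := hp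
    have hℓ0 : 0 < ℓ := hℓ1
    have hmul : d * ℓ ≤ N := (Nat.le_div_iff_mul_le hℓ0).mp hdN
    exact ⟨⟨Nat.one_le_iff_ne_zero.mpr (by positivity), hmul⟩, ⟨dvd_mul_left ℓ d, by positivity⟩⟩
  · rintro ⟨n, ℓ⟩ hp
    simp only [Finset.mem_sigma, Finset.mem_Icc, Nat.mem_divisors] at hp ⊢
    obtain ⟨⟨hn1, hnN⟩, hℓn, hn0⟩ := hp
    have hℓ0 : 0 < ℓ := Nat.pos_of_dvd_of_pos hℓn hn1
    constructor
    · exact ⟨hℓ0, le_trans (Nat.le_of_dvd hn1 hℓn) hnN⟩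
    · constructor
      · exact Nat.one_le_div_iff hℓ0 |>.mpr (Nat.le_of_dvd hn1 hℓn)
      · exact Nat.div_le_div_right hnN
  · rintro ⟨ℓ, d⟩ hp
    simp only [Finset.mem_sigma, Finset.mem_Icc] at hp
    have hℓ0 : 0 < ℓ := hp.1.1
    simp [Nat.mul_div_cancel _ hℓ0]
  · rintro ⟨n, ℓ⟩ hp
    simp only [Finset.mem_sigma, Finset.mem_Icc, Nat.mem_divisors] at hp
    have := Nat.div_mul_cancel hp.2.1
    simp [this]
  · rintro ⟨ℓ, d⟩ _; rfl

lemma reindex_mult (N ℓ : ℕ) (hℓ : 1 ≤ ℓ) (c : ℕ → ℂ) :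
    ∑ d ∈ (Icc 1 N).filter (fun d => ℓ ∣ d), c d
      = ∑ m ∈ Icc 1 (N / ℓ), c (m * ℓ) := by
  refine Finset.sum_nbij' (fun d => d / ℓ) (fun m => m * ℓ) ?_ ?_ ?_ ?_ ?_
  · intro d hd
    simp only [Finset.mem_filter, Finset.mem_Icc] at hd ⊢
    obtain ⟨⟨h1, h2⟩, hdvd⟩ := hd
    exact ⟨Nat.one_le_div_iff hℓ |>.mpr (Nat.le_of_dvd h1 hdvd), Nat.div_le_div_right h2⟩
  · intro m hm
    simp only [Finset.mem_filter, Finset.mem_Icc] at hm ⊢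
    exact ⟨⟨Nat.one_le_iff_ne_zero.mpr (Nat.mul_ne_zero (by omega) (by omega)), (Nat.le_div_iff_mul_le hℓ).mp hm.2⟩, dvd_mul_left ℓ m⟩
  · intro d hd
    simp only [Finset.mem_filter, Finset.mem_Icc] at hd
    exact Nat.div_mul_cancel hd.2
  · intro m hm
    exact Nat.mul_div_cancel _ hℓ
  · intro d hd
    simp only [Finset.mem_filter, Finset.mem_Icc] at hd
    rw [Nat.div_mul_cancel hd.2]

lemma gcd_eq_sum_ite (N d e : ℕ) (hd1 : 1 ≤ d) (hdN : d ≤ N) (he1 : 1 ≤ e) :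
    ((Nat.gcd d e : ℕ) : ℂ) = ∑ ℓ ∈ Icc 1 N, (if ℓ ∣ d ∧ ℓ ∣ e then (Nat.totient ℓ : ℂ) else 0) := by
  have hset : (Nat.gcd d e).divisors = (Icc 1 N).filter (fun ℓ => ℓ ∣ d ∧ ℓ ∣ e) := by
    ext ℓ
    simp only [Nat.mem_divisors, Finset.mem_filter, Finset.mem_Icc, Nat.dvd_gcd_iff]
    constructor
    · rintro ⟨⟨h1, h2⟩, hg0⟩
      have hℓ0 : 0 < ℓ := Nat.pos_of_dvd_of_pos h1 hd1
      exact ⟨⟨hℓ0, le_trans (Nat.le_of_dvd hd1 h1) hdN⟩, h1, h2⟩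
    · rintro ⟨_, h1, h2⟩
      refine ⟨⟨h1, h2⟩, ?_⟩
      exact Nat.ne_of_gt (Nat.gcd_pos_of_pos_left e hd1)
  rw [← Nat.sum_totient (Nat.gcd d e), ← Finset.sum_filter, ← hset]
  push_cast
  rfl

lemma diag (N : ℕ) (a : ℕ → ℂ) (y : ℕ → ℂ)
    (hy : ∀ ℓ, y ℓ = ∑ d ∈ Icc 1 (N / ℓ), a (d * ℓ) / (d : ℂ)) :
    (∑ d ∈ Icc 1 N, ∑ e ∈ Icc 1 N, a d * (starRingEnd ℂ) (a e) / (Nat.lcm d e : ℂ))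
      = ∑ ℓ ∈ Icc 1 N, (Nat.totient ℓ : ℂ) / (ℓ : ℂ) ^ 2 * (y ℓ * (starRingEnd ℂ) (y ℓ)) := by
  set c : ℕ → ℂ := fun n => a n / n with hc
  set S : ℕ → ℂ := fun ℓ => ∑ d ∈ (Icc 1 N).filter (fun d => ℓ ∣ d), c d with hS
  have step1 : ∀ d ∈ Icc 1 N, ∀ e ∈ Icc 1 N,
      a d * (starRingEnd ℂ) (a e) / (Nat.lcm d e : ℂ)
        = ∑ ℓ ∈ Icc 1 N,
            (if ℓ ∣ d ∧ ℓ ∣ e then (Nat.totient ℓ : ℂ) * (c d * (starRingEnd ℂ) (c e)) else 0) := by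
    intro d hd e he
    simp only [mem_Icc] at hd he
    have hd0 : (d : ℂ) ≠ 0 := Nat.cast_ne_zero.mpr (by omega)
    have he0 : (e : ℂ) ≠ 0 := Nat.cast_ne_zero.mpr (by omega)
    have hL0 : (Nat.lcm d e : ℂ) ≠ 0 :=
      Nat.cast_ne_zero.mpr (Nat.lcm_ne_zero (by omega) (by omega))
    have key : (Nat.gcd d e : ℂ) * (Nat.lcm d e : ℂ) = (d : ℂ) * e := by
      exact_mod_cast congrArg (Nat.cast : ℕ → ℂ) (Nat.gcd_mul_lcm d e)
    have h1 : a d * (starRingEnd ℂ) (a e) / (Nat.lcm d e : ℂ)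
        = (Nat.gcd d e : ℂ) * (c d * (starRingEnd ℂ) (c e)) := by
      simp only [hc, map_div₀, map_natCast]
      field_simp
      linear_combination (-(a d * (starRingEnd ℂ) (a e))) * key
    rw [h1, gcd_eq_sum_ite N d e hd.1 hd.2 he.1, Finset.sum_mul]
    refine Finset.sum_congr rfl fun ℓ _ => ?_
    by_cases h : ℓ ∣ d ∧ ℓ ∣ e <;> simp [h]
  rw [Finset.sum_congr rfl fun d hd => Finset.sum_congr rfl fun e he => step1 d hd e he]
  have swap1 : (∑ d ∈ Icc 1 N, ∑ e ∈ Icc 1 N, ∑ ℓ ∈ Icc 1 N,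
      (if ℓ ∣ d ∧ ℓ ∣ e then (Nat.totient ℓ : ℂ) * (c d * (starRingEnd ℂ) (c e)) else 0))
      = ∑ ℓ ∈ Icc 1 N, ∑ d ∈ Icc 1 N, ∑ e ∈ Icc 1 N,
      (if ℓ ∣ d ∧ ℓ ∣ e then (Nat.totient ℓ : ℂ) * (c d * (starRingEnd ℂ) (c e)) else 0) := by
    exact (Finset.sum_congr rfl fun d _ => Finset.sum_comm).trans Finset.sum_comm
  rw [swap1]
  refine Finset.sum_congr rfl fun ℓ hℓ => ?_
  simp only [mem_Icc] at hℓ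
  have hℓ0 : (ℓ : ℂ) ≠ 0 := Nat.cast_ne_zero.mpr (by omega)
  have inner : ∀ d, (∑ e ∈ Icc 1 N,
      (if ℓ ∣ d ∧ ℓ ∣ e then (Nat.totient ℓ : ℂ) * (c d * (starRingEnd ℂ) (c e)) else 0))
      = if ℓ ∣ d then ∑ e ∈ (Icc 1 N).filter (fun e => ℓ ∣ e),
          (Nat.totient ℓ : ℂ) * (c d * (starRingEnd ℂ) (c e)) else 0 := by
    intro d
    by_cases h : ℓ ∣ d
    · simp only [h, true_and, if_true, Finset.sum_filter]
    · simp [h]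
  rw [Finset.sum_congr rfl fun d _ => inner d, ← Finset.sum_filter]
  have factored : (∑ d ∈ (Icc 1 N).filter (fun d => ℓ ∣ d),
      ∑ e ∈ (Icc 1 N).filter (fun e => ℓ ∣ e),
        (Nat.totient ℓ : ℂ) * (c d * (starRingEnd ℂ) (c e)))
      = (Nat.totient ℓ : ℂ) * (S ℓ * (starRingEnd ℂ) (S ℓ)) := by
    rw [hS, map_sum, Finset.sum_mul_sum, Finset.mul_sum]
    exact Finset.sum_congr rfl fun d _ => by rw [Finset.mul_sum]
  rw [factored]
  have hSy : S ℓ = y ℓ / ℓ := by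
    show (∑ d ∈ (Icc 1 N).filter (fun d => ℓ ∣ d), c d) = y ℓ / ℓ
    rw [reindex_mult N ℓ hℓ.1 c, hy, Finset.sum_div]
    refine Finset.sum_congr rfl fun m hm => ?_
    simp only [mem_Icc] at hm
    have hm0 : (m : ℂ) ≠ 0 := Nat.cast_ne_zero.mpr (by omega)
    simp only [hc]
    push_cast
    field_simp
  rw [hSy, map_div₀, map_natCast]
  ring

lemma moebius_divisor_sum (n : ℕ) :
    (∑ ℓ ∈ n.divisors, ((moebius ℓ : ℤ) : ℂ)) = if n = 1 then 1 else 0 := by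
  calc (∑ ℓ ∈ n.divisors, ((moebius ℓ : ℤ) : ℂ))
      = ((↑(moebius) * ArithmeticFunction.zeta : ArithmeticFunction ℂ)) n := by
        rw [coe_mul_zeta_apply]
        exact Finset.sum_congr rfl fun ℓ _ => (intCoe_apply ..).symm
    _ = (1 : ArithmeticFunction ℂ) n := by rw [coe_moebius_mul_coe_zeta]
    _ = if n = 1 then 1 else 0 := one_apply

lemma lemmaC (N : ℕ) (hN : 1 ≤ N) (a : ℕ → ℂ) (y : ℕ → ℂ)
    (hy : ∀ ℓ, y ℓ = ∑ d ∈ Icc 1 (N / ℓ), a (d * ℓ) / (d : ℂ)) :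
    (∑ ℓ ∈ Icc 1 N, ((moebius ℓ : ℤ) : ℂ) * y ℓ / ℓ) = a 1 := by
  have h1 : ∀ ℓ ∈ Icc 1 N, ((moebius ℓ : ℤ) : ℂ) * y ℓ / ℓ
      = ∑ d ∈ Icc 1 (N / ℓ), ((moebius ℓ : ℤ) : ℂ) * a (d * ℓ) / ((d * ℓ : ℕ) : ℂ) := by
    intro ℓ hℓ
    rw [hy ℓ, Finset.mul_sum, Finset.sum_div]
    refine Finset.sum_congr rfl fun d hd => ?_
    push_cast
    ring
  rw [Finset.sum_congr rfl h1,
    swap_sum N (fun ℓ n => ((moebius ℓ : ℤ) : ℂ) * a n / n)]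
  have h2 : ∀ n ∈ Icc 1 N,
      (∑ ℓ ∈ n.divisors, ((moebius ℓ : ℤ) : ℂ) * a n / n) = if n = 1 then a n / n else 0 := by
    intro n _
    have : (∑ ℓ ∈ n.divisors, ((moebius ℓ : ℤ) : ℂ) * a n / n)
        = (∑ ℓ ∈ n.divisors, ((moebius ℓ : ℤ) : ℂ)) * (a n / n) := by
      rw [Finset.sum_mul]
      exact Finset.sum_congr rfl fun _ _ => (mul_div_assoc _ _ _)
    rw [this, moebius_divisor_sum]
    split <;> simp
  rw [Finset.sum_congr rfl h2, Finset.sum_ite_eq' (Icc 1 N) 1 (fun n => a n / n)]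
  simp [hN]

/-- exact identity `∑ a(d)conj(a(e))/[d,e] = 1/G + ∑ (φ(ℓ)/ℓ²)|y(ℓ)-z(ℓ)|²`. -/
theorem quadratic_form_exact_identity (N : ℕ) (hN : 1 ≤ N) (a : ℕ → ℂ) (ha : a 1 = 1)
    (G : ℝ)
    (hG : G = ∑ n ∈ Finset.Icc 1 N, (ArithmeticFunction.moebius n : ℝ) ^ 2 / Nat.totient n)
    (y : ℕ → ℂ) (hy : ∀ ℓ, y ℓ = ∑ d ∈ Finset.Icc 1 (N / ℓ), a (d * ℓ) / (d : ℂ))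
    (z : ℕ → ℝ)
    (hz : ∀ ℓ, z ℓ = (ArithmeticFunction.moebius ℓ : ℝ) / G * ((ℓ : ℝ) / Nat.totient ℓ)) :
    (∑ d ∈ Finset.Icc 1 N, ∑ e ∈ Finset.Icc 1 N,
        a d * (starRingEnd ℂ) (a e) / (Nat.lcm d e : ℂ)) =
      ((1 / G : ℝ) : ℂ) + ∑ ℓ ∈ Finset.Icc 1 N,
        (((Nat.totient ℓ : ℝ) / (ℓ : ℝ) ^ 2 * ‖y ℓ - ((z ℓ : ℝ) : ℂ)‖ ^ 2 : ℝ) : ℂ) := by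
  have hG1 : (1 : ℝ) ≤ G := by
    rw [hG]
    have h1mem : (1 : ℕ) ∈ Icc 1 N := by simp [hN]
    have hone : ((moebius 1 : ℤ) : ℝ) ^ 2 / (Nat.totient 1 : ℝ) = 1 := by simp
    calc (1 : ℝ) = ((moebius 1 : ℤ) : ℝ) ^ 2 / (Nat.totient 1 : ℝ) := hone.symm
      _ ≤ _ := Finset.single_le_sum (f := fun n => ((moebius n : ℤ) : ℝ) ^ 2 / (Nat.totient n : ℝ))
          (fun i _ => div_nonneg (sq_nonneg _) (Nat.cast_nonneg _)) h1mem
  have hG0 : G ≠ 0 := by linarith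
  set P : ℕ → ℝ := fun ℓ => (Nat.totient ℓ : ℝ) / (ℓ : ℝ) ^ 2 with hP
  -- real part of the Möbius identity
  have hC : (∑ ℓ ∈ Icc 1 N, ((moebius ℓ : ℤ) : ℝ) * (y ℓ).re / ℓ) = 1 := by
    have hCc : (∑ ℓ ∈ Icc 1 N, ((moebius ℓ : ℤ) : ℂ) * y ℓ / ℓ) = 1 := by
      rw [lemmaC N hN a y hy, ha]
    have := congrArg Complex.re hCc
    rw [Complex.re_sum, Complex.one_re] at this
    rw [← this]
    refine (Finset.sum_congr rfl fun ℓ hℓ => ?_)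
    simp only [mem_Icc] at hℓ
    have hℓ0 : (ℓ : ℂ) ≠ 0 := Nat.cast_ne_zero.mpr (by omega)
    have : ((moebius ℓ : ℤ) : ℂ) * y ℓ / ℓ = ((((moebius ℓ : ℤ) : ℝ) / ℓ : ℝ) : ℂ) * y ℓ := by
      push_cast
      field_simp
    rw [this, Complex.re_ofReal_mul]
    ring
  -- ∑ P z² = 1/G
  have hz2 : (∑ ℓ ∈ Icc 1 N, P ℓ * z ℓ ^ 2) = 1 / G := by
    have hpt : ∀ ℓ ∈ Icc 1 N, P ℓ * z ℓ ^ 2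
        = ((moebius ℓ : ℤ) : ℝ) ^ 2 / (Nat.totient ℓ : ℝ) * (1 / G ^ 2) := by
      intro ℓ hℓ
      simp only [mem_Icc] at hℓ
      have hℓ0 : (ℓ : ℝ) ≠ 0 := Nat.cast_ne_zero.mpr (by omega)
      have hφ0 : (Nat.totient ℓ : ℝ) ≠ 0 :=
        Nat.cast_ne_zero.mpr (Nat.totient_pos.mpr (by omega)).ne'
      rw [hz, hP]
      field_simp
    rw [Finset.sum_congr rfl hpt, ← Finset.sum_mul, ← hG]
    field_simp
  -- ∑ P z y.re = 1/G
  have hcross : (∑ ℓ ∈ Icc 1 N, P ℓ * z ℓ * (y ℓ).re) = 1 / G := by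
    have hpt : ∀ ℓ ∈ Icc 1 N, P ℓ * z ℓ * (y ℓ).re
        = (1 / G) * (((moebius ℓ : ℤ) : ℝ) * (y ℓ).re / ℓ) := by
      intro ℓ hℓ
      simp only [mem_Icc] at hℓ
      have hℓ0 : (ℓ : ℝ) ≠ 0 := Nat.cast_ne_zero.mpr (by omega)
      have hφ0 : (Nat.totient ℓ : ℝ) ≠ 0 :=
        Nat.cast_ne_zero.mpr (Nat.totient_pos.mpr (by omega)).ne'
      rw [hz, hP]
      field_simp
    rw [Finset.sum_congr rfl hpt, ← Finset.mul_sum, hC, mul_one]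
  -- expansion of the norm square
  have hnorm : ∀ ℓ, ‖y ℓ - ((z ℓ : ℝ) : ℂ)‖ ^ 2
      = ‖y ℓ‖ ^ 2 - 2 * z ℓ * (y ℓ).re + z ℓ ^ 2 := by
    intro ℓ
    simp only [Complex.sq_norm, Complex.normSq_apply, Complex.sub_re,
      Complex.sub_im, Complex.ofReal_re, Complex.ofReal_im]
    ring
  -- the real identity
  have hreal : (∑ ℓ ∈ Icc 1 N, P ℓ * ‖y ℓ‖ ^ 2)
      = 1 / G + ∑ ℓ ∈ Icc 1 N, P ℓ * ‖y ℓ - ((z ℓ : ℝ) : ℂ)‖ ^ 2 := by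
    have hexp : ∀ ℓ ∈ Icc 1 N, P ℓ * ‖y ℓ - ((z ℓ : ℝ) : ℂ)‖ ^ 2
        = P ℓ * ‖y ℓ‖ ^ 2 - 2 * (P ℓ * z ℓ * (y ℓ).re) + P ℓ * z ℓ ^ 2 := by
      intro ℓ _
      rw [hnorm]
      ring
    rw [Finset.sum_congr rfl hexp, Finset.sum_add_distrib, Finset.sum_sub_distrib,
      ← Finset.mul_sum, hcross, hz2]
    ring
  -- assemble
  rw [diag N a y hy]
  have hterm : ∀ ℓ ∈ Icc 1 N, (Nat.totient ℓ : ℂ) / (ℓ : ℂ) ^ 2 * (y ℓ * (starRingEnd ℂ) (y ℓ))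
      = ((P ℓ * ‖y ℓ‖ ^ 2 : ℝ) : ℂ) := by
    intro ℓ _
    rw [Complex.mul_conj, hP]
    push_cast [Complex.normSq_eq_norm_sq]
    ring
  rw [Finset.sum_congr rfl hterm, ← Complex.ofReal_sum, hreal, Complex.ofReal_add,
    Complex.ofReal_sum]
end

section
/- There exists a constant C > 0 such that for all N \ge 3 and all positive integers m \le N, \sum_{p^{\alpha} \ell = m, \alpha \ge 1} (\log p / p^{\alpha}) \cdot \varphi(\ell)/\ell^2 = (\varphi(m)/m^2) \log m + E(m) with |E(m)| \le C (\varphi(m)/m^2) \log\log(m+2), where the sum runs over all factorizations m = p^{\alpha} \ell with p prime, \alpha \ge 1, and \gcd(p, \ell) arbitrary (i.e., p^{\alpha} exactly the contribution of one prime power factor). -/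
open Finset

noncomputable def theta (n : ℕ) : ℝ := ∑ p ∈ (range (n+1)).filter Nat.Prime, Real.log p

lemma theta_nonneg (n : ℕ) : 0 ≤ theta n := by
  apply Finset.sum_nonneg
  intro p hp
  have := (Finset.mem_filter.1 hp).2.one_lt
  apply Real.log_nonneg
  exact_mod_cast this.le

lemma theta_le (n : ℕ) : theta n ≤ n * Real.log 4 := by
  have h := primorial_le_4_pow n
  have h0 : (0:ℝ) < (primorial n : ℝ) := by exact_mod_cast primorial_pos n
  have hlog : Real.log (primorial n) ≤ Real.log ((4:ℕ)^n : ℕ) := by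
    apply Real.log_le_log h0
    exact_mod_cast h
  have h1 : Real.log (primorial n) = theta n := by
    unfold theta primorial
    rw [Nat.cast_prod, Real.log_prod]
    intro p hp
    have := (Finset.mem_filter.1 hp).2.pos
    positivity
  have h2 : Real.log ((4:ℕ)^n : ℕ) = n * Real.log 4 := by
    push_cast
    rw [Real.log_pow]
  rw [h1, h2] at hlog
  exact hlog

noncomputable def mert (n : ℕ) : ℝ := ∑ p ∈ (range (n+1)).filter Nat.Prime, Real.log p / p

lemma mert_aux (T : ℕ) (hT : 1 ≤ T) : mert T ≤ theta T / T + Real.log 4 * Real.log T := by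
  induction T, hT using Nat.le_induction with
  | base =>
    have he : (range 2).filter Nat.Prime = ∅ := by decide
    simp [mert, theta, he]
  | succ T hT ih =>
    have hT0 : (0:ℝ) < T := by exact_mod_cast hT
    have hT1 : (0:ℝ) < (T:ℝ) + 1 := by linarith
    have hsplit : ∀ f : ℕ → ℝ,
        ∑ p ∈ (range (T+2)).filter Nat.Prime, f p
        = (∑ p ∈ (range (T+1)).filter Nat.Prime, f p)
          + (if (T+1).Prime then f (T+1) else 0) := by
      intro f
      rw [Finset.range_add_one, Finset.filter_insert]
      split
      · rw [Finset.sum_insert (by simp)]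
        exact add_comm _ _
      · exact (add_zero _).symm
    have hM : mert (T+1) = mert T + (if (T+1).Prime then Real.log ((T:ℝ)+1) / ((T:ℝ)+1) else 0) := by
      unfold mert; rw [hsplit]; push_cast; ring_nf
    have hTh : theta (T+1) = theta T + (if (T+1).Prime then Real.log ((T:ℝ)+1) else 0) := by
      unfold theta; rw [hsplit]; push_cast; ring_nf
    have hlog : 1/((T:ℝ)+1) ≤ Real.log (T+1) - Real.log T := by
      have h := Real.log_le_sub_one_of_pos (x := (T:ℝ)/(T+1)) (by positivity)
      rw [Real.log_div (ne_of_gt hT0) (ne_of_gt hT1)] at h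
      have h2 : (T:ℝ)/(T+1) - 1 = -(1/(T+1)) := by field_simp; ring
      linarith
    have hkey : theta T / T + Real.log 4 * Real.log T
        ≤ theta T / (T+1) + Real.log 4 * Real.log (T+1) := by
      have e1 : theta T / T = theta T/(T+1) + theta T/(T*(T+1)) := by
        field_simp
      have e2 : theta T/((T:ℝ)*(T+1)) ≤ Real.log 4/(T+1) := by
        rw [div_le_div_iff₀ (by positivity) hT1]
        nlinarith [theta_le T, hT0]
      have h4 : (0:ℝ) < Real.log 4 := Real.log_pos (by norm_num)
      have e3 : Real.log 4/((T:ℝ)+1) ≤ Real.log 4 * (Real.log (T+1) - Real.log T) := by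
        rw [div_eq_mul_one_div]
        exact mul_le_mul_of_nonneg_left hlog h4.le
      nlinarith
    rw [hM, hTh]
    have hadd : ∀ x : ℝ, (theta T + x)/((T:ℝ)+1) = theta T/((T:ℝ)+1) + x/((T:ℝ)+1) := by
      intro x; rw [add_div]
    push_cast
    split_ifs with hp
    · rw [hadd]; linarith
    · rw [add_zero, add_zero]; linarith

lemma mert_le (T : ℕ) (hT : 1 ≤ T) : mert T ≤ Real.log 4 * (1 + Real.log T) := by
  have h1 := mert_aux T hT
  have hT0 : (0:ℝ) < T := by exact_mod_cast hT
  have h2 : theta T / T ≤ Real.log 4 := by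
    rw [div_le_iff₀ hT0]
    have := theta_le T
    linarith
  have h3 : Real.log 4 * (1 + Real.log T) = Real.log 4 + Real.log 4 * Real.log T := by ring
  linarith

lemma sum_pf (m : ℕ) (hm : 1 ≤ m) :
    ∑ p ∈ m.primeFactors, Real.log p / p
      ≤ (Real.log 4 * (1 + Real.log 4) + 1) + Real.log 4 * Real.log (Real.log (m+2)) := by
  set L := Real.log m with hLdef
  set T : ℕ := ⌊L⌋₊ + 3 with hTdef
  have hL0 : 0 ≤ L := Real.log_nonneg (by exact_mod_cast hm)
  have hTle : (T:ℝ) ≤ L + 3 := by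
    have := Nat.floor_le hL0
    push_cast [hTdef]
    linarith
  have hLT : L < (T:ℝ) := by
    have := Nat.lt_floor_add_one L
    push_cast [hTdef]
    linarith
  have hT0 : (0:ℝ) < T := by positivity
  rw [← Finset.sum_filter_add_sum_filter_not m.primeFactors (fun p => p ≤ T)]
  have hsub : m.primeFactors.filter (· ≤ T) ⊆ (range (T+1)).filter Nat.Prime := by
    intro p hp
    simp only [Finset.mem_filter, Finset.mem_range, Nat.lt_succ_iff] at *
    exact ⟨hp.2, (Nat.prime_of_mem_primeFactors hp.1)⟩
  have hsmall : ∑ p ∈ m.primeFactors.filter (· ≤ T), Real.log p / p ≤ mert T := by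
    apply Finset.sum_le_sum_of_subset_of_nonneg hsub
    intro p hp _
    have hp2 := (Finset.mem_filter.1 hp).2.one_lt
    have : (1:ℝ) ≤ p := by exact_mod_cast hp2.le
    have := Real.log_nonneg this
    positivity
  -- big primes
  set B := m.primeFactors.filter (fun p => ¬ p ≤ T) with hBdef
  have hdvd : ∏ p ∈ B, p ∣ m :=
    dvd_trans (Finset.prod_dvd_prod_of_subset _ _ _ (Finset.filter_subset _ _))
      (Nat.prod_primeFactors_dvd m)
  have hprodle : (∏ p ∈ B, p : ℕ) ≤ m := Nat.le_of_dvd hm hdvd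
  have hlogprod : ∑ p ∈ B, Real.log p ≤ L := by
    have h1 : ∑ p ∈ B, Real.log p = Real.log ((∏ p ∈ B, p : ℕ) : ℝ) := by
      rw [Nat.cast_prod, Real.log_prod]
      intro p hp
      have hppos := (Nat.prime_of_mem_primeFactors (Finset.mem_filter.1 hp).1).pos
      exact Nat.cast_ne_zero.2 hppos.ne' 
    rw [h1, hLdef]
    have hpos : 0 < ∏ p ∈ B, p :=
      Finset.prod_pos (fun p hp => (Nat.prime_of_mem_primeFactors (Finset.mem_filter.1 hp).1).pos)
    exact Real.log_le_log (by exact_mod_cast hpos) (by exact_mod_cast hprodle)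
  have hbig : ∑ p ∈ B, Real.log p / p ≤ 1 := by
    have h1 : ∀ p ∈ B, Real.log p / p ≤ Real.log p / ((T:ℝ)+1) := by
      intro p hp
      have hp1 : p ∈ m.primeFactors := (Finset.mem_filter.1 hp).1
      have hpT : T < p := Nat.lt_of_not_le (Finset.mem_filter.1 hp).2
      have hpT' : (T:ℝ)+1 ≤ p := by exact_mod_cast hpT
      have hl : (0:ℝ) ≤ Real.log p :=
        Real.log_nonneg (by exact_mod_cast (Nat.prime_of_mem_primeFactors hp1).one_lt.le)
      gcongr
    calc ∑ p ∈ B, Real.log p / p ≤ ∑ p ∈ B, Real.log p / ((T:ℝ)+1) :=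
          Finset.sum_le_sum h1
      _ = (∑ p ∈ B, Real.log p) / ((T:ℝ)+1) := by rw [Finset.sum_div]
      _ ≤ L / ((T:ℝ)+1) := by gcongr <;> linarith
      _ ≤ 1 := by rw [div_le_one (by linarith)]; linarith
  -- combine
  have hmertT := mert_le T (by omega)
  have he3 : (1:ℝ) ≤ Real.log (m+2) := by
    rw [Real.le_log_iff_exp_le (by positivity)]
    have := Real.exp_one_lt_d9
    have h3 : (3:ℝ) ≤ (m:ℝ) + 2 := by
      have : (1:ℝ) ≤ m := by exact_mod_cast hm
      linarith
    linarith
  have hm2 : L ≤ Real.log (m+2) := by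
    rw [hLdef]
    apply Real.log_le_log (by exact_mod_cast hm)
    push_cast
    linarith
  have h3 : L + 3 ≤ 4 * Real.log (m+2) := by linarith
  have hlogT : Real.log T ≤ Real.log 4 + Real.log (Real.log (m+2)) := by
    calc Real.log T ≤ Real.log (L+3) := Real.log_le_log hT0 hTle
      _ ≤ Real.log (4 * Real.log (m+2)) := Real.log_le_log (by linarith) h3
      _ = Real.log 4 + Real.log (Real.log (m+2)) :=
          Real.log_mul (by norm_num) (by linarith)
  have h4 : (0:ℝ) ≤ Real.log 4 := Real.log_nonneg (by norm_num)
  have h5 := mul_le_mul_of_nonneg_left hlogT h4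
  nlinarith

lemma tot_pow_mul {p : ℕ} (hp : p.Prime) (k n : ℕ) (h : p ∣ n) :
    (p ^ k * n).totient = p ^ k * n.totient := by
  induction k with
  | zero => simp
  | succ k ih =>
    have h2 : p ∣ p ^ k * n := Dvd.dvd.mul_left h _
    calc (p^(k+1) * n).totient = (p * (p^k * n)).totient := by ring_nf
      _ = p * (p^k*n).totient := Nat.totient_mul_of_prime_of_dvd hp h2
      _ = p^(k+1) * n.totient := by rw [ih]; ring

lemma inner_eval {m p : ℕ} (hm : 0 < m) (hp : p ∈ m.primeFactors) :
    ∑ α ∈ Finset.Icc 1 m,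
      (if p ^ α ∣ m then
        Real.log p / (p : ℝ) ^ α *
          ((Nat.totient (m / p ^ α) : ℝ) / ((m / p ^ α : ℕ) : ℝ) ^ 2)
      else 0)
    = (Nat.totient m : ℝ) / (m : ℝ) ^ 2 *
        ((m.factorization p : ℝ) * Real.log p + Real.log p / ((p:ℝ) - 1)) := by
  have pp : p.Prime := Nat.prime_of_mem_primeFactors hp
  have hpm : p ∣ m := Nat.dvd_of_mem_primeFactors hp
  set v := m.factorization p with hv
  have hv1 : 1 ≤ v := pp.factorization_pos_of_dvd hm.ne' hpm
  have hvm : v ≤ m := (Nat.factorization_lt p hm.ne').le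
  have hp0 : (0:ℝ) < p := by exact_mod_cast pp.pos
  have hp1 : (1:ℝ) < p := by exact_mod_cast pp.one_lt
  rw [← Finset.sum_filter]
  have hset : (Finset.Icc 1 m).filter (fun α => p ^ α ∣ m) = Finset.Icc 1 v := by
    ext α
    simp only [Finset.mem_filter, Finset.mem_Icc]
    constructor
    · rintro ⟨⟨h1, _⟩, hd⟩
      exact ⟨h1, (pp.pow_dvd_iff_le_factorization hm.ne').1 hd⟩
    · rintro ⟨h1, h2⟩
      exact ⟨⟨h1, le_trans h2 hvm⟩, (pp.pow_dvd_iff_le_factorization hm.ne').2 h2⟩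
  rw [hset]
  have hterm : ∀ α ∈ Finset.Icc 1 v,
      Real.log p / (p:ℝ)^α * ((Nat.totient (m/p^α) : ℝ)/((m/p^α : ℕ):ℝ)^2)
      = (Nat.totient m : ℝ)/(m:ℝ)^2 * Real.log p *
          (if α = v then (p:ℝ)/((p:ℝ)-1) else 1) := by
    intro α hα
    obtain ⟨hα1, hαv⟩ := Finset.mem_Icc.1 hα
    have hd : p ^ α ∣ m := (pp.pow_dvd_iff_le_factorization hm.ne').2 hαv
    set ℓ := m / p ^ α with hℓ
    have hmeq : m = p ^ α * ℓ := (Nat.mul_div_cancel' hd).symm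
    have hℓ0 : 0 < ℓ := Nat.div_pos (Nat.le_of_dvd hm hd) (pow_pos pp.pos α)
    have hℓr : (0:ℝ) < ℓ := by exact_mod_cast hℓ0
    by_cases hcase : α = v
    · have hcop : Nat.Coprime p ℓ := by
        rw [hℓ, hcase]
        exact Nat.coprime_ordCompl pp hm.ne'
      have htot : m.totient = p^(α-1) * (p-1) * ℓ.totient := by
        rw [hmeq, Nat.totient_mul (Nat.Coprime.pow_left _ hcop),
          Nat.totient_prime_pow pp hα1]
      rw [if_pos hcase]
      have hmr : (m:ℝ) = (p:ℝ)^α * ℓ := by exact_mod_cast hmeq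
      have htr : (m.totient : ℝ) = (p:ℝ)^(α-1) * ((p:ℝ)-1) * (ℓ.totient : ℝ) := by
        rw [htot]
        push_cast [Nat.cast_sub pp.one_le]
        ring
      have hpv : (p:ℝ)^α = (p:ℝ)^(α-1) * p := by
        rw [← pow_succ]
        congr 1
        omega
      rw [hmr, htr, hpv]
      have h1 : (p:ℝ) - 1 ≠ 0 := by linarith
      field_simp
    · have hαv' : α + 1 ≤ v := by omega
      have hpl : p ∣ ℓ := by
        rw [hℓ, Nat.dvd_div_iff_mul_dvd hd, ← pow_succ]
        exact (pp.pow_dvd_iff_le_factorization hm.ne').2 hαv'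
      have htot : m.totient = p^α * ℓ.totient := by rw [hmeq, tot_pow_mul pp α ℓ hpl]
      rw [if_neg hcase]
      have hmr : (m:ℝ) = (p:ℝ)^α * ℓ := by exact_mod_cast hmeq
      have htr : (m.totient:ℝ) = (p:ℝ)^α * ℓ.totient := by exact_mod_cast htot
      rw [hmr, htr]
      field_simp
  rw [Finset.sum_congr rfl hterm]
  have hite : ∑ α ∈ Finset.Icc 1 v, (if α = v then (p:ℝ)/((p:ℝ)-1) else 1)
      = ((v:ℝ) - 1) + (p:ℝ)/((p:ℝ)-1) := by
    have h1 : ∀ α, (if α = v then (p:ℝ)/((p:ℝ)-1) else 1)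
        = 1 + (if α = v then (p:ℝ)/((p:ℝ)-1) - 1 else 0) := by
      intro α; split <;> ring
    simp_rw [h1]
    rw [Finset.sum_add_distrib, Finset.sum_const,
      Finset.sum_ite_eq' (Finset.Icc 1 v) v (fun _ => (p:ℝ)/((p:ℝ)-1) - 1),
      if_pos (Finset.mem_Icc.2 ⟨hv1, le_refl v⟩), Nat.card_Icc]
    have : (v + 1 - 1 : ℕ) = v := by omega
    rw [this]
    push_cast
    ring
  rw [← Finset.mul_sum, hite]
  have h1 : (p:ℝ) - 1 ≠ 0 := by linarith
  field_simp
  ring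

lemma outer_eval (m : ℕ) (hm : 0 < m) :
    ∑ p ∈ (Finset.range (m + 1)).filter Nat.Prime, ∑ α ∈ Finset.Icc 1 m,
        (if p ^ α ∣ m then
          Real.log p / (p : ℝ) ^ α *
            ((Nat.totient (m / p ^ α) : ℝ) / ((m / p ^ α : ℕ) : ℝ) ^ 2)
        else 0)
    = (Nat.totient m : ℝ) / (m : ℝ) ^ 2 *
        (Real.log m + ∑ p ∈ m.primeFactors, Real.log p / ((p:ℝ) - 1)) := by
  have hsub : m.primeFactors ⊆ (Finset.range (m+1)).filter Nat.Prime := by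
    intro p hp
    simp only [Finset.mem_filter, Finset.mem_range, Nat.lt_succ_iff]
    exact ⟨Nat.le_of_dvd hm (Nat.dvd_of_mem_primeFactors hp),
      Nat.prime_of_mem_primeFactors hp⟩
  rw [← Finset.sum_subset hsub (by
    intro p hpr hpf
    apply Finset.sum_eq_zero
    intro α hα
    rw [if_neg]
    intro hdvd
    have hα1 : 1 ≤ α := (Finset.mem_Icc.1 hα).1
    have hpd : p ∣ m := dvd_trans (dvd_pow_self p (by omega)) hdvd
    exact hpf (Nat.mem_primeFactors.2
      ⟨(Finset.mem_filter.1 hpr).2, hpd, hm.ne'⟩))]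
  rw [Finset.sum_congr rfl (fun p hp => inner_eval hm hp)]
  rw [← Finset.mul_sum, Finset.sum_add_distrib]
  congr 2
  have h1 : Real.log m = ∑ p ∈ m.primeFactors, Real.log ((p:ℝ) ^ (m.factorization p)) := by
    conv_lhs => rw [← Nat.factorization_prod_pow_eq_self hm.ne']
    rw [Finsupp.prod, Nat.support_factorization, Nat.cast_prod, Real.log_prod]
    · apply Finset.sum_congr rfl
      intro p hp
      push_cast
      rfl
    · intro p hp
      have := (Nat.prime_of_mem_primeFactors hp).pos
      positivity
  rw [h1]
  apply Finset.sum_congr rfl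
  intro p hp
  rw [Real.log_pow]


/-- `∑_{p^α ℓ = m, α ≥ 1} (log p / p^α) φ(ℓ)/ℓ² = (φ(m)/m²) log m
+ O((φ(m)/m²) log log (m+2))`, uniformly for `m ≤ N`. -/
theorem prime_power_factorization_sum :
    ∃ C : ℝ, 0 < C ∧ ∀ N : ℕ, 3 ≤ N → ∀ m : ℕ, 0 < m → m ≤ N →
      |(∑ p ∈ (Finset.range (m + 1)).filter Nat.Prime, ∑ α ∈ Finset.Icc 1 m,
          (if p ^ α ∣ m then
            Real.log p / (p : ℝ) ^ α *
              ((Nat.totient (m / p ^ α) : ℝ) / ((m / p ^ α : ℕ) : ℝ) ^ 2)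
          else 0)) -
        (Nat.totient m : ℝ) / (m : ℝ) ^ 2 * Real.log m| ≤
      C * ((Nat.totient m : ℝ) / (m : ℝ) ^ 2) * Real.log (Real.log (m + 2)) := by
  set A : ℝ := Real.log 4 * (1 + Real.log 4) + 1 with hA
  set B : ℝ := Real.log 4 with hB
  set ε : ℝ := Real.log (Real.log 3) with hε
  have hlog4 : (0:ℝ) < Real.log 4 := Real.log_pos (by norm_num)
  have hA0 : 0 < A := by positivity
  have hB0 : 0 < B := hlog4
  have hlog3 : (1:ℝ) < Real.log 3 := by
    rw [Real.lt_log_iff_exp_lt (by norm_num)]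
    have := Real.exp_one_lt_d9
    linarith
  have hε0 : 0 < ε := Real.log_pos hlog3
  refine ⟨2*A/ε + 2*B + 1, by positivity, ?_⟩
  intro N _ m hm _
  set R : ℝ := ∑ p ∈ m.primeFactors, Real.log p / ((p:ℝ) - 1) with hR
  set LL : ℝ := Real.log (Real.log (m + 2)) with hLL
  have hφ0 : (0:ℝ) ≤ (Nat.totient m : ℝ) / (m : ℝ) ^ 2 := by positivity
  have hR0 : 0 ≤ R := by
    apply Finset.sum_nonneg
    intro p hp
    have h2 : (2:ℝ) ≤ p := by exact_mod_cast (Nat.prime_of_mem_primeFactors hp).two_le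
    have := Real.log_nonneg (by linarith : (1:ℝ) ≤ p)
    have : (0:ℝ) < (p:ℝ) - 1 := by linarith
    positivity
  have hdiff : (∑ p ∈ (Finset.range (m + 1)).filter Nat.Prime, ∑ α ∈ Finset.Icc 1 m,
          (if p ^ α ∣ m then
            Real.log p / (p : ℝ) ^ α *
              ((Nat.totient (m / p ^ α) : ℝ) / ((m / p ^ α : ℕ) : ℝ) ^ 2)
          else 0)) -
        (Nat.totient m : ℝ) / (m : ℝ) ^ 2 * Real.log m
      = (Nat.totient m : ℝ) / (m : ℝ) ^ 2 * R := by
    rw [outer_eval m hm]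
    ring
  rw [hdiff, abs_of_nonneg (mul_nonneg hφ0 hR0)]
  -- bound R
  have hR2 : R ≤ 2 * (∑ p ∈ m.primeFactors, Real.log p / p) := by
    rw [Finset.mul_sum]
    apply Finset.sum_le_sum
    intro p hp
    have h2 : (2:ℝ) ≤ p := by exact_mod_cast (Nat.prime_of_mem_primeFactors hp).two_le
    have hl : (0:ℝ) ≤ Real.log p := Real.log_nonneg (by linarith)
    rw [div_le_iff₀ (by linarith : (0:ℝ) < (p:ℝ) - 1)]
    rw [mul_comm 2 (Real.log p / p), div_mul_eq_mul_div, div_mul_eq_mul_div,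
      le_div_iff₀ (by linarith : (0:ℝ) < (p:ℝ))]
    nlinarith
  have hpf := sum_pf m hm
  have hRle : R ≤ 2 * A + 2 * B * LL := by
    have := hR2.trans (by linarith : 2 * (∑ p ∈ m.primeFactors, Real.log p / p)
      ≤ 2 * (A + B * LL))
    linarith
  -- LL ≥ ε
  have hLLε : ε ≤ LL := by
    rw [hLL, hε]
    have h3 : (3:ℝ) ≤ (m:ℝ) + 2 := by
      have : (1:ℝ) ≤ m := by exact_mod_cast hm
      linarith
    have hin : Real.log 3 ≤ Real.log ((m:ℝ) + 2) := Real.log_le_log (by norm_num) h3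
    exact Real.log_le_log (by linarith) hin
  have hLL0 : 0 ≤ LL := le_trans hε0.le hLLε
  have hC : 2 * A + 2 * B * LL ≤ (2*A/ε + 2*B + 1) * LL := by
    have h1 : 2 * A = (2*A/ε) * ε := by field_simp
    have h2 : (2*A/ε) * ε ≤ (2*A/ε) * LL :=
      mul_le_mul_of_nonneg_left hLLε (by positivity)
    nlinarith
  calc (Nat.totient m : ℝ) / (m : ℝ) ^ 2 * R
      ≤ (Nat.totient m : ℝ) / (m : ℝ) ^ 2 * ((2*A/ε + 2*B + 1) * LL) := by
        apply mul_le_mul_of_nonneg_left (hRle.trans hC) hφ0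
    _ = (2*A/ε + 2*B + 1) * ((Nat.totient m : ℝ) / (m : ℝ) ^ 2) * LL := by ring
end

section
/- As N \to \infty, G := \sum_{n \le N} \mu(n)^2/\varphi(n) = \log N + O(1); in particular G \sim \log N. -/
open Finset ArithmeticFunction Filter

namespace GAsymp

noncomputable def cp (p : ℕ) : ℝ := ((p : ℝ) * ((p : ℝ) - 1))⁻¹

noncomputable def hval (p e : ℕ) : ℝ :=
  if e = 0 then 1 else if e = 1 then cp p else if e = 2 then -cp p else 0

noncomputable def hf : ℕ → ℝ :=
  fun n => if n = 0 then 0 else ∏ p ∈ n.primeFactors, hval p (n.factorization p)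

lemma hf_zero : hf 0 = 0 := by simp [hf]

lemma hf_one : hf 1 = 1 := by simp [hf]

lemma hf_pp {p : ℕ} (hp : p.Prime) {k : ℕ} (hk : k ≠ 0) : hf (p ^ k) = hval p k := by
  rw [hf, if_neg (pow_ne_zero _ hp.ne_zero)]
  rw [Nat.primeFactors_prime_pow hk hp, hp.factorization_pow]
  simp

lemma hf_mul {m n : ℕ} (h : Nat.Coprime m n) : hf (m * n) = hf m * hf n := by
  rcases eq_or_ne m 0 with rfl | hm
  · simp [hf_zero]
  rcases eq_or_ne n 0 with rfl | hn
  · simp [hf_zero]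
  rw [hf, hf, hf, if_neg (Nat.mul_ne_zero hm hn), if_neg hm, if_neg hn,
    Nat.Coprime.primeFactors_mul h, Finset.prod_union h.disjoint_primeFactors]
  congr 1
  · refine Finset.prod_congr rfl fun p hp => ?_
    rw [Nat.factorization_mul hm hn]
    have : n.factorization p = 0 := by
      apply Nat.factorization_eq_zero_of_not_dvd
      intro hdvd
      exact (Nat.prime_of_mem_primeFactors hp).ne_one
        (Nat.eq_one_of_dvd_one (h ▸ Nat.dvd_gcd (Nat.dvd_of_mem_primeFactors hp) hdvd))
    simp [this]
  · refine Finset.prod_congr rfl fun p hp => ?_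
    rw [Nat.factorization_mul hm hn]
    have : m.factorization p = 0 := by
      apply Nat.factorization_eq_zero_of_not_dvd
      intro hdvd
      exact (Nat.prime_of_mem_primeFactors hp).ne_one
        (Nat.eq_one_of_dvd_one (h ▸ Nat.dvd_gcd hdvd (Nat.dvd_of_mem_primeFactors hp)))
    simp [this]


noncomputable def H : ArithmeticFunction ℝ := ⟨hf, hf_zero⟩

lemma H_apply (n : ℕ) : H n = hf n := rfl

lemma H_mult : H.IsMultiplicative :=
  ⟨hf_one, fun h => hf_mul h⟩

noncomputable def B : ArithmeticFunction ℝ :=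
  ⟨fun n => (moebius n : ℝ) ^ 2 * n / (Nat.totient n), by simp⟩

lemma B_apply (n : ℕ) : B n = (moebius n : ℝ) ^ 2 * n / (Nat.totient n) := rfl

lemma B_mult : B.IsMultiplicative := by
  constructor
  · simp [B_apply]
  · intro m n h
    rcases eq_or_ne m 0 with rfl | hm
    · have : n = 1 := by simpa using h
      simp [this, B_apply]
    rcases eq_or_ne n 0 with rfl | hn
    · have : m = 1 := by simpa [Nat.coprime_zero_right] using h
      simp [this, B_apply]
    simp only [B_apply]
    rw [isMultiplicative_moebius.map_mul_of_coprime h, Nat.totient_mul h]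
    have h1 : (Nat.totient m : ℝ) ≠ 0 := by
      exact_mod_cast (Nat.totient_pos.mpr (Nat.pos_of_ne_zero hm)).ne'
    have h2 : (Nat.totient n : ℝ) ≠ 0 := by
      exact_mod_cast (Nat.totient_pos.mpr (Nat.pos_of_ne_zero hn)).ne'
    push_cast
    field_simp

noncomputable def A : ArithmeticFunction ℝ :=
  ((ArithmeticFunction.id : ArithmeticFunction ℕ) : ArithmeticFunction ℝ).pmul H * ArithmeticFunction.zeta

lemma A_apply (n : ℕ) : A n = ∑ d ∈ n.divisors, (d : ℝ) * hf d := by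
  rw [A, coe_mul_zeta_apply]
  exact Finset.sum_congr rfl fun d _ => by simp [pmul_apply, H_apply]

lemma A_mult : A.IsMultiplicative :=
  ((isMultiplicative_id.natCast).pmul H_mult).mul isMultiplicative_zeta.natCast

lemma cp_pos {p : ℕ} (hp : p.Prime) : 0 < cp p := by
  have : (2:ℝ) ≤ p := by exact_mod_cast hp.two_le
  have : (0:ℝ) < (p : ℝ) * ((p:ℝ) - 1) := by nlinarith
  exact inv_pos.mpr this

lemma A_eq_B : A = B := by
  rw [ArithmeticFunction.IsMultiplicative.eq_iff_eq_on_prime_powers A A_mult B B_mult]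
  intro p i hp
  have hp2 : (2:ℝ) ≤ p := by exact_mod_cast hp.two_le
  have hpm1 : (p:ℝ) - 1 ≠ 0 := by nlinarith
  have hpne : (p:ℝ) ≠ 0 := by nlinarith
  have hterm : ∀ j : ℕ, ((p:ℝ) ^ j) * hf (p ^ j) =
      if j = 0 then 1 else if j = 1 then (p:ℝ) * cp p
        else if j = 2 then -((p:ℝ)^2 * cp p) else 0 := by
    intro j
    rcases eq_or_ne j 0 with rfl | hj
    · simp [hf_one]
    rw [hf_pp hp hj, hval, if_neg hj]
    rcases eq_or_ne j 1 with rfl | hj1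
    · norm_num
    rcases eq_or_ne j 2 with rfl | hj2
    · norm_num <;> ring
    · simp [hj, hj1, hj2]
  have hsum : ∑ j ∈ Finset.range (i+1), ((p:ℝ) ^ j) * hf (p ^ j) =
      if i = 0 then 1 else if i = 1 then 1 + (p:ℝ) * cp p else 0 := by
    rcases eq_or_ne i 0 with rfl | hi0
    · simp [hterm]
    rcases eq_or_ne i 1 with rfl | hi1
    · rw [Finset.sum_range_succ, Finset.sum_range_one, hterm 0, hterm 1]
      simp
    · have h2i : 2 ≤ i := by omega
      have hres : ∑ j ∈ Finset.range (i+1), ((p:ℝ) ^ j) * hf (p ^ j)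
          = ∑ j ∈ Finset.range 3, ((p:ℝ) ^ j) * hf (p ^ j) := by
        refine (Finset.sum_subset ?_ ?_).symm
        · intro x hx; simp only [Finset.mem_range] at *; omega
        · intro x _ hx
          simp only [Finset.mem_range] at hx
          rw [hterm x]
          have hx0 : x ≠ 0 := by omega
          have hx1 : x ≠ 1 := by omega
          have hx2 : x ≠ 2 := by omega
          simp [hx0, hx1, hx2]
      rw [hres, Finset.sum_range_succ, Finset.sum_range_succ, Finset.sum_range_one,
        hterm 0, hterm 1, hterm 2, if_neg hi0, if_neg hi1]
      norm_num [cp]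
      field_simp
      ring
  rw [A_apply, Nat.divisors_prime_pow hp, Finset.sum_map]
  simp only [Function.Embedding.coeFn_mk, Nat.cast_pow]
  rw [hsum, B_apply]
  rcases eq_or_ne i 0 with rfl | hi0
  · simp
  rcases eq_or_ne i 1 with rfl | hi1
  · rw [if_neg one_ne_zero, if_pos rfl, pow_one, moebius_apply_prime hp,
      Nat.totient_prime hp, cp]
    have : ((p - 1 : ℕ) : ℝ) = (p:ℝ) - 1 := by
      have := hp.two_le; push_cast [Nat.cast_sub (by omega : 1 ≤ p)]; ring
    rw [this]
    field_simp
    ring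
  · rw [if_neg hi0, if_neg hi1, moebius_apply_prime_pow hp hi0, if_neg hi1]
    norm_num

lemma pointwise (n : ℕ) (hn : n ≠ 0) :
    (moebius n : ℝ) ^ 2 / (Nat.totient n) =
      ∑ x ∈ n.divisorsAntidiagonal, hf x.1 * ((x.2 : ℝ))⁻¹ := by
  have hB : B n = A n := by rw [A_eq_B]
  rw [B_apply] at hB
  have hA : A n = ∑ x ∈ n.divisorsAntidiagonal, (x.1 : ℝ) * hf x.1 := by
    rw [A_apply, ← Nat.sum_divisorsAntidiagonal (fun d _ => (d : ℝ) * hf d)]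
  have hnR : (n : ℝ) ≠ 0 := Nat.cast_ne_zero.mpr hn
  have hφ : (Nat.totient n : ℝ) ≠ 0 := by
    exact_mod_cast (Nat.totient_pos.mpr (Nat.pos_of_ne_zero hn)).ne'
  have h2 : ∑ x ∈ n.divisorsAntidiagonal, hf x.1 * ((x.2 : ℝ))⁻¹
      = (∑ x ∈ n.divisorsAntidiagonal, (x.1 : ℝ) * hf x.1) / n := by
    rw [Finset.sum_div]
    refine Finset.sum_congr rfl fun x hx => ?_
    obtain ⟨hxy, _⟩ := Nat.mem_divisorsAntidiagonal.mp hx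
    have hy : x.2 ≠ 0 := by rintro h; rw [h, mul_zero] at hxy; exact hn hxy.symm
    have hyR : ((x.2 : ℕ) : ℝ) ≠ 0 := Nat.cast_ne_zero.mpr hy
    have hx1 : x.1 ≠ 0 := by rintro h0; rw [h0, zero_mul] at hxy; exact hn hxy.symm
    have hx1R : ((x.1 : ℕ) : ℝ) ≠ 0 := Nat.cast_ne_zero.mpr hx1
    rw [← hxy]
    push_cast
    field_simp
  rw [h2, ← hA, ← hB]
  field_simp

noncomputable def Hr (M : ℕ) : ℝ := ∑ e ∈ Finset.Icc 1 M, ((e : ℝ))⁻¹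

noncomputable def G (N : ℕ) : ℝ :=
  ∑ n ∈ Finset.Icc 1 N, (moebius n : ℝ) ^ 2 / (Nat.totient n)

lemma G_eq (N : ℕ) : G N = ∑ d ∈ Finset.Icc 1 N, hf d * Hr (N / d) := by
  rw [G]
  rw [Finset.sum_congr rfl (fun n hn => pointwise n (by
    simp only [Finset.mem_Icc] at hn; omega))]
  rw [Finset.sum_sigma']
  simp only [Hr, Finset.mul_sum]
  rw [Finset.sum_sigma']
  refine Finset.sum_nbij' (fun x => ⟨x.2.1, x.2.2⟩) (fun x => ⟨x.1 * x.2, (x.1, x.2)⟩)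
    ?_ ?_ ?_ ?_ ?_
  · rintro ⟨n, d, e⟩ hx
    simp only [Finset.mem_sigma, Finset.mem_Icc, Nat.mem_divisorsAntidiagonal] at hx ⊢
    obtain ⟨⟨hn1, hnN⟩, hde, hn0⟩ := hx
    subst hde
    obtain ⟨hd0, he0⟩ := Nat.mul_ne_zero_iff.mp hn0
    have hd0' : 0 < d := Nat.pos_of_ne_zero hd0
    have he0' : 0 < e := Nat.pos_of_ne_zero he0
    refine ⟨⟨hd0', le_trans (Nat.le_mul_of_pos_right d he0') hnN⟩, he0', ?_⟩
    rw [Nat.le_div_iff_mul_le hd0', mul_comm]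
    exact hnN
  · rintro ⟨d, e⟩ hx
    simp only [Finset.mem_sigma, Finset.mem_Icc] at hx ⊢
    obtain ⟨⟨hd1, hdN⟩, he1, heNd⟩ := hx
    have hd0' : 0 < d := hd1
    rw [Nat.le_div_iff_mul_le hd0'] at heNd
    have hdeN : d * e ≤ N := by rw [mul_comm]; exact heNd
    refine ⟨⟨Nat.mul_pos hd1 he1, hdeN⟩, ?_⟩
    rw [Nat.mem_divisorsAntidiagonal]
    exact ⟨rfl, by positivity⟩
  · rintro ⟨n, d, e⟩ hx
    simp only [Finset.mem_sigma, Nat.mem_divisorsAntidiagonal] at hx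
    obtain ⟨_, hde, _⟩ := hx
    simp [hde]
  · rintro ⟨d, e⟩ _
    rfl
  · rintro ⟨n, d, e⟩ _
    rfl

noncomputable def F : ℕ → ℝ := fun d => (d : ℝ) ^ ((1:ℝ)/4) * |hf d|

lemma F_nonneg : ∀ d, 0 ≤ F d := fun d => by
  unfold F; positivity

lemma F_one : F 1 = 1 := by simp [F, hf_one]

lemma F_mul {m n : ℕ} (h : Nat.Coprime m n) : F (m * n) = F m * F n := by
  unfold F
  rw [hf_mul h, Nat.cast_mul, Real.mul_rpow (by positivity) (by positivity), abs_mul]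
  ring

lemma hf_pp_eq_zero {p : ℕ} (hp : p.Prime) {e : ℕ} (he : 3 ≤ e) : hf (p ^ e) = 0 := by
  rw [hf_pp hp (by omega), hval]
  have h0 : e ≠ 0 := by omega
  have h1 : e ≠ 1 := by omega
  have h2 : e ≠ 2 := by omega
  simp [h0, h1, h2]

lemma F_pp_eq_zero {p : ℕ} (hp : p.Prime) {e : ℕ} (he : 3 ≤ e) : F (p ^ e) = 0 := by
  simp [F, hf_pp_eq_zero hp he]

lemma summable_F_pp {p : ℕ} (hp : p.Prime) : Summable (fun e : ℕ => ‖F (p ^ e)‖) := by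
  apply summable_of_ne_finset_zero (s := Finset.range 3)
  intro e he
  simp only [Finset.mem_range, not_lt] at he
  simp [F_pp_eq_zero hp he]

lemma tsum_F_pp {p : ℕ} (hp : p.Prime) :
    ∑' e : ℕ, F (p ^ e) = 1 + F p + F (p ^ 2) := by
  rw [tsum_eq_sum (s := Finset.range 3) (fun e he => by
    simp only [Finset.mem_range, not_lt] at he
    exact F_pp_eq_zero hp he)]
  rw [Finset.sum_range_succ, Finset.sum_range_succ, Finset.sum_range_one]
  simp [F_one]

lemma factor_le {p : ℕ} (hp : p.Prime) :
    1 + F p + F (p ^ 2) ≤ Real.exp (4 * (((p:ℝ)) ^ ((3:ℝ)/2))⁻¹) := by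
  have hx : (2:ℝ) ≤ p := by exact_mod_cast hp.two_le
  have hx1 : (1:ℝ) ≤ p := by linarith
  have hx0 : (0:ℝ) < p := by linarith
  have hcp : 0 < cp p := cp_pos hp
  have e1 : hf p = cp p := by
    have h := hf_pp hp (k := 1) one_ne_zero
    rw [pow_one] at h
    rw [h, hval]; norm_num
  have e2 : hf (p ^ 2) = -cp p := by
    rw [hf_pp hp two_ne_zero, hval]; norm_num
  have hFp : F p = (p:ℝ) ^ ((1:ℝ)/4) * cp p := by
    rw [F, e1, abs_of_pos hcp]
  have hFp2 : F (p ^ 2) = (p:ℝ) ^ ((1:ℝ)/2) * cp p := by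
    rw [F, e2, abs_neg, abs_of_pos hcp, Nat.cast_pow,
      ← Real.rpow_natCast ((p:ℝ)) 2, ← Real.rpow_mul (le_of_lt hx0)]
    norm_num
  have hmono : (p:ℝ) ^ ((1:ℝ)/4) ≤ (p:ℝ) ^ ((1:ℝ)/2) :=
    Real.rpow_le_rpow_of_exponent_le hx1 (by norm_num)
  have hkey : (p:ℝ) ^ ((1:ℝ)/2) * cp p ≤ 2 * (((p:ℝ)) ^ ((3:ℝ)/2))⁻¹ := by
    have h1 : (p:ℝ) ^ ((3:ℝ)/2) * ((p:ℝ) ^ ((1:ℝ)/2) * cp p) ≤ 2 := by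
      rw [cp, ← mul_assoc, ← Real.rpow_add hx0]
      norm_num
      have hpm : (0:ℝ) < ((p:ℝ) - 1) * (p:ℝ) := by nlinarith
      rw [← mul_inv, mul_inv_le_iff₀ hpm]
      nlinarith
    have h3 : (0:ℝ) < (p:ℝ) ^ ((3:ℝ)/2) := Real.rpow_pos_of_pos hx0 _
    calc (p:ℝ) ^ ((1:ℝ)/2) * cp p
        = ((p:ℝ) ^ ((3:ℝ)/2) * ((p:ℝ) ^ ((1:ℝ)/2) * cp p)) * (((p:ℝ) ^ ((3:ℝ)/2))⁻¹) := by
          field_simp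
      _ ≤ 2 * (((p:ℝ)) ^ ((3:ℝ)/2))⁻¹ := by
          apply mul_le_mul_of_nonneg_right h1 (by positivity)
  have : F p + F (p ^ 2) ≤ 4 * (((p:ℝ)) ^ ((3:ℝ)/2))⁻¹ := by
    rw [hFp, hFp2]
    have := mul_le_mul_of_nonneg_right hmono (le_of_lt hcp)
    linarith
  calc 1 + F p + F (p^2) ≤ 1 + 4 * (((p:ℝ)) ^ ((3:ℝ)/2))⁻¹ := by linarith
    _ ≤ Real.exp (4 * (((p:ℝ)) ^ ((3:ℝ)/2))⁻¹) := by
        have := Real.add_one_le_exp (4 * (((p:ℝ)) ^ ((3:ℝ)/2))⁻¹)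
        linarith

noncomputable def T : ℝ := ∑' k : ℕ, (((k:ℝ)) ^ ((3:ℝ)/2))⁻¹

lemma summable_T : Summable (fun k : ℕ => (((k:ℝ)) ^ ((3:ℝ)/2))⁻¹) :=
  Real.summable_nat_rpow_inv.mpr (by norm_num)

lemma sumF_le (N : ℕ) : ∑ d ∈ Finset.Icc 1 N, F d ≤ Real.exp (4 * T) := by
  obtain ⟨hsummable, hhassum⟩ :=
    EulerProduct.summable_and_hasSum_smoothNumbers_prod_primesBelow_tsum
      F_one (fun h => F_mul h) (fun hp => summable_F_pp hp) (N + 1)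
  have hind : HasSum (Set.indicator ((N+1).smoothNumbers) F)
      (∏ p ∈ (N+1).primesBelow, ∑' e : ℕ, F (p ^ e)) := by
    rwa [← hasSum_subtype_iff_indicator]
  have hle : ∑ d ∈ Finset.Icc 1 N, F d
      ≤ ∏ p ∈ (N+1).primesBelow, ∑' e : ℕ, F (p ^ e) := by
    have := sum_le_hasSum (Finset.Icc 1 N)
      (fun i _ => Set.indicator_nonneg (fun x _ => F_nonneg x) i) hind
    refine le_trans (le_of_eq ?_) this
    refine Finset.sum_congr rfl fun d hd => ?_
    simp only [Finset.mem_Icc] at hd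
    rw [Set.indicator_of_mem]
    rw [Nat.mem_smoothNumbers]
    exact ⟨by omega, fun q hq => by
      have := Nat.le_of_mem_primeFactorsList hq
      omega⟩
  refine hle.trans ?_
  have hstep : ∏ p ∈ (N+1).primesBelow, (∑' e : ℕ, F (p ^ e))
      ≤ ∏ p ∈ (N+1).primesBelow, Real.exp (4 * (((p:ℝ)) ^ ((3:ℝ)/2))⁻¹) := by
    apply Finset.prod_le_prod
    · intro p hp
      rw [tsum_F_pp (Nat.prime_of_mem_primesBelow hp)]
      have := F_nonneg p; have := F_nonneg (p^2); linarith
    · intro p hp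
      rw [tsum_F_pp (Nat.prime_of_mem_primesBelow hp)]
      exact factor_le (Nat.prime_of_mem_primesBelow hp)
  refine hstep.trans ?_
  rw [← Real.exp_sum]
  apply Real.exp_le_exp.mpr
  rw [← Finset.mul_sum]
  have hsub : ∑ p ∈ (N+1).primesBelow, (((p:ℝ)) ^ ((3:ℝ)/2))⁻¹
      ≤ ∑ k ∈ Finset.range (N+1), (((k:ℝ)) ^ ((3:ℝ)/2))⁻¹ := by
    apply Finset.sum_le_sum_of_subset_of_nonneg
    · exact Finset.filter_subset _ _
    · intro k _ _; positivity
  have hT : ∑ k ∈ Finset.range (N+1), (((k:ℝ)) ^ ((3:ℝ)/2))⁻¹ ≤ T :=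
    Summable.sum_le_tsum _ (fun k _ => by positivity) summable_T
  nlinarith [hsub, hT]

lemma summable_F : Summable F := by
  apply summable_of_sum_le (c := Real.exp (4 * T)) F_nonneg
  intro u
  rcases Finset.eq_empty_or_nonempty u with rfl | hu
  · simp [Real.exp_pos, le_of_lt (Real.exp_pos _)]
  set M := u.sup _root_.id with hM
  have hsub : u ⊆ Finset.Icc 0 M := by
    intro x hx
    simp only [Finset.mem_Icc]
    exact ⟨Nat.zero_le x, Finset.le_sup (f := _root_.id) hx⟩
  have h1 : ∑ x ∈ u, F x ≤ ∑ x ∈ Finset.Icc 0 M, F x :=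
    Finset.sum_le_sum_of_subset_of_nonneg hsub (fun i _ _ => F_nonneg i)
  have h2 : ∑ x ∈ Finset.Icc 0 M, F x = ∑ x ∈ Finset.Icc 1 M, F x := by
    refine (Finset.sum_subset (fun x hx => ?_) (fun x hx hnx => ?_)).symm
    · simp only [Finset.mem_Icc] at hx ⊢; omega
    · simp only [Finset.mem_Icc] at hx hnx
      have : x = 0 := by omega
      simp [this, F, hf_zero]
  rw [h2] at h1
  exact h1.trans (sumF_le M)

noncomputable def TF : ℝ := ∑' d, F d

lemma sum_F_le_TF (s : Finset ℕ) : ∑ d ∈ s, F d ≤ TF :=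
  Summable.sum_le_tsum s (fun d _ => F_nonneg d) summable_F

lemma abs_hf_le_F : ∀ d, |hf d| ≤ F d := by
  intro d
  rcases eq_or_ne d 0 with rfl | hd
  · simp [hf_zero, F]
  have h1 : (1:ℝ) ≤ (d:ℝ) ^ ((1:ℝ)/4) := by
    apply Real.one_le_rpow (by exact_mod_cast Nat.one_le_iff_ne_zero.mpr hd) (by norm_num)
  calc |hf d| = 1 * |hf d| := (one_mul _).symm
    _ ≤ (d:ℝ) ^ ((1:ℝ)/4) * |hf d| := by
        apply mul_le_mul_of_nonneg_right h1 (abs_nonneg _)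
    _ = F d := rfl

lemma summable_abs_hf : Summable (fun d => |hf d|) :=
  Summable.of_nonneg_of_le (fun d => abs_nonneg _) abs_hf_le_F summable_F

lemma summable_hf : Summable hf := by
  have := summable_abs_hf
  rwa [summable_abs_iff] at this

lemma tsum_hf_pp {p : ℕ} (hp : p.Prime) : ∑' e : ℕ, hf (p ^ e) = 1 := by
  rw [tsum_eq_sum (s := Finset.range 3) (fun e he => by
    simp only [Finset.mem_range, not_lt] at he
    exact hf_pp_eq_zero hp he)]
  rw [Finset.sum_range_succ, Finset.sum_range_succ, Finset.sum_range_one]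
  have e1 : hf p = cp p := by
    have h := hf_pp hp (k := 1) one_ne_zero
    rw [pow_one] at h
    rw [h, hval]; norm_num
  have e2 : hf (p ^ 2) = -cp p := by
    rw [hf_pp hp two_ne_zero, hval]; norm_num
  rw [pow_zero, hf_one, pow_one, e1, e2]
  ring

lemma tsum_hf : ∑' d, hf d = 1 := by
  have hnorm : Summable (fun d => ‖hf d‖) := by
    simpa [Real.norm_eq_abs] using summable_abs_hf
  have := EulerProduct.eulerProduct hf_one (fun h => hf_mul h) hnorm hf_zero
  have hconst : (fun n : ℕ => ∏ p ∈ n.primesBelow, ∑' e : ℕ, hf (p ^ e))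
      = fun _ => 1 := by
    funext n
    rw [Finset.prod_congr rfl (fun p hp => tsum_hf_pp (Nat.prime_of_mem_primesBelow hp))]
    simp
  rw [hconst] at this
  exact (tendsto_nhds_unique tendsto_const_nhds this).symm

lemma S_tail (N : ℕ) (hN : 1 ≤ N) :
    |(∑ d ∈ Finset.Icc 1 N, hf d) - 1| ≤ TF / (N:ℝ) ^ ((1:ℝ)/4) := by
  have hNpos : (0:ℝ) < (N:ℝ) ^ ((1:ℝ)/4) := by
    apply Real.rpow_pos_of_pos
    exact_mod_cast Nat.lt_of_lt_of_le Nat.zero_lt_one hN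
  set s : Set ℕ := ((Finset.Icc 1 N : Finset ℕ) : Set ℕ) with hs
  set g : ℕ → ℝ := Set.indicator sᶜ hf with hgdef
  have hsum_ind : Summable (s.indicator hf) := summable_hf.indicator s
  have hsum_g : Summable g := summable_hf.indicator sᶜ
  have hdecomp : ∑ d ∈ Finset.Icc 1 N, hf d + ∑' d, g d = 1 := by
    have h1 : ∑' d, (s.indicator hf d + g d) = ∑' d, hf d := by
      congr 1
      funext d
      rw [hgdef]
      have := Set.indicator_self_add_compl_apply s hf d
      exact this
    rw [Summable.tsum_add hsum_ind hsum_g] at h1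
    have h2 : ∑' d, s.indicator hf d = ∑ d ∈ Finset.Icc 1 N, hf d := by
      rw [← tsum_subtype s hf, hs]
      exact Finset.tsum_subtype _ hf
    rw [h2] at h1
    rw [h1, tsum_hf]
  have h1 : (∑ d ∈ Finset.Icc 1 N, hf d) - 1 = -(∑' d, g d) := by linarith
  rw [h1, abs_neg]
  have habs : |∑' d, g d| ≤ ∑' d, |g d| := by
    have := norm_tsum_le_tsum_norm (f := g) (by
      simpa [Real.norm_eq_abs] using hsum_g.abs)
    simpa [Real.norm_eq_abs] using this
  refine habs.trans ?_
  have hptwise : ∀ d, |g d| ≤ F d / (N:ℝ) ^ ((1:ℝ)/4) := by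
    intro d
    by_cases hd : d ∈ s
    · rw [hgdef]
      rw [Set.indicator_of_notMem (by simpa using hd)]
      simp only [abs_zero]
      exact div_nonneg (F_nonneg d) (le_of_lt hNpos)
    · rw [hgdef, Set.indicator_of_mem (by simpa using hd)]
      have hd' : d ∉ Finset.Icc 1 N := by
        simpa [hs] using hd
      simp only [Finset.mem_Icc, not_and, not_le] at hd'
      rcases eq_or_ne d 0 with rfl | hd0
      · simp only [hf_zero, abs_zero]
        exact div_nonneg (F_nonneg 0) (le_of_lt hNpos)
      · have hdN : N < d := hd' (Nat.one_le_iff_ne_zero.mpr hd0)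
        have hx14 : (N:ℝ) ^ ((1:ℝ)/4) ≤ (d:ℝ) ^ ((1:ℝ)/4) :=
          Real.rpow_le_rpow (by positivity) (by exact_mod_cast le_of_lt hdN) (by norm_num)
        rw [le_div_iff₀ hNpos]
        calc |hf d| * (N:ℝ) ^ ((1:ℝ)/4) ≤ |hf d| * (d:ℝ) ^ ((1:ℝ)/4) :=
              mul_le_mul_of_nonneg_left hx14 (abs_nonneg _)
          _ = F d := by rw [F]; ring
  calc ∑' d, |g d| ≤ ∑' d, F d / (N:ℝ) ^ ((1:ℝ)/4) :=
        Summable.tsum_le_tsum hptwise hsum_g.abs (summable_F.div_const _)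
    _ = TF / (N:ℝ) ^ ((1:ℝ)/4) := by rw [tsum_div_const]; rfl

lemma Hr_eq (M : ℕ) : Hr M = (harmonic M : ℝ) := by
  rw [Hr, harmonic_eq_sum_Icc]
  push_cast
  rfl

lemma Hr_bounds (M : ℕ) (hM : 1 ≤ M) : |Hr M - Real.log M| ≤ 1 := by
  have hlow : Real.log M ≤ Hr M := by
    rw [Hr_eq]
    refine le_trans ?_ (log_add_one_le_harmonic M)
    apply Real.log_le_log (by exact_mod_cast hM)
    push_cast; linarith
  have hhigh : Hr M ≤ 1 + Real.log M := by
    rw [Hr_eq]; exact harmonic_le_one_add_log M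
  rw [abs_le]
  constructor <;> linarith

lemma log_le_rpow {x : ℝ} (hx : 1 ≤ x) : Real.log x ≤ 4 * (x ^ ((1:ℝ)/4) - 1) := by
  have hx0 : (0:ℝ) < x := by linarith
  have h1 : Real.log (x ^ ((1:ℝ)/4)) = (1/4) * Real.log x := Real.log_rpow hx0 _
  have h2 : Real.log (x ^ ((1:ℝ)/4)) ≤ x ^ ((1:ℝ)/4) - 1 :=
    Real.log_le_sub_one_of_pos (Real.rpow_pos_of_pos hx0 _)
  rw [h1] at h2
  linarith

lemma main_bound (N : ℕ) (hN : 1 ≤ N) : |G N - Real.log N| ≤ 8 * TF := by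
  have hTF0 : (0:ℝ) ≤ TF := tsum_nonneg F_nonneg
  have hN0 : (0:ℝ) < N := by exact_mod_cast hN
  have hN1 : (1:ℝ) ≤ N := by exact_mod_cast hN
  rw [G_eq]
  have hsplit : ∑ d ∈ Finset.Icc 1 N, hf d * Hr (N / d)
      = ∑ d ∈ Finset.Icc 1 N, hf d * (Hr (N / d) - Real.log N)
        + (∑ d ∈ Finset.Icc 1 N, hf d) * Real.log N := by
    rw [Finset.sum_mul, ← Finset.sum_add_distrib]
    refine Finset.sum_congr rfl fun d _ => by ring
  rw [hsplit]
  have habs1 : |∑ d ∈ Finset.Icc 1 N, hf d * (Hr (N / d) - Real.log N)| ≤ 4 * TF := by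
    refine le_trans (Finset.abs_sum_le_sum_abs _ _) ?_
    have hterm : ∀ d ∈ Finset.Icc 1 N,
        |hf d * (Hr (N / d) - Real.log N)| ≤ 4 * F d := by
      intro d hd
      simp only [Finset.mem_Icc] at hd
      obtain ⟨hd1, hdN⟩ := hd
      have hd0 : (0:ℝ) < d := by exact_mod_cast hd1
      have hd1R : (1:ℝ) ≤ d := by exact_mod_cast hd1
      set M := N / d with hM
      have hM1 : 1 ≤ M := Nat.one_le_div_iff (by omega) |>.mpr hdN
      have hM0 : (0:ℝ) < M := by exact_mod_cast hM1
      -- N < d * (M + 1) ≤ 2 * d * M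
      have hNlt : N < d * (M + 1) := by
        have h := Nat.div_add_mod N d
        have h2 : N % d < d := Nat.mod_lt _ (by omega)
        have h3 : d * (M + 1) = d * (N / d) + d := by rw [hM]; ring
        omega
      have hM1R : (1:ℝ) ≤ M := by exact_mod_cast hM1
      have hNle : (N:ℝ) ≤ 2 * d * M := by
        have h1 : (N:ℝ) < d * (M + 1) := by exact_mod_cast hNlt
        have h2 : (M:ℝ) + 1 ≤ 2 * M := by linarith
        nlinarith
      have hlogs : Real.log N - Real.log M ≤ 1 + Real.log d := by
        have h3 : Real.log N ≤ Real.log (2 * d * M) :=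
          Real.log_le_log hN0 hNle
        rw [Real.log_mul (by positivity) (by positivity),
          Real.log_mul (by norm_num) (by positivity)] at h3
        have hlog2 : Real.log 2 ≤ 1 := by
          calc Real.log 2 ≤ 2 - 1 := Real.log_le_sub_one_of_pos (by norm_num)
            _ = 1 := by norm_num
        linarith
      have hHr : |Hr M - Real.log M| ≤ 1 := Hr_bounds M hM1
      have hlogsN : Real.log M ≤ Real.log N := by
        apply Real.log_le_log hM0
        exact_mod_cast Nat.div_le_self N d
      have hbound : |Hr M - Real.log N| ≤ 2 + Real.log d := by
        rw [abs_le] at hHr ⊢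
        constructor
        · have : (0:ℝ) ≤ Real.log d := Real.log_nonneg hd1R
          linarith
        · have : Real.log N - Real.log M ≥ 0 := by linarith
          linarith
      have hlogd : Real.log d ≤ 4 * ((d:ℝ) ^ ((1:ℝ)/4) - 1) := log_le_rpow hd1R
      have hfinal : |Hr M - Real.log N| ≤ 4 * (d:ℝ) ^ ((1:ℝ)/4) := by
        have := hbound.trans (by linarith : 2 + Real.log d ≤ 4 * (d:ℝ) ^ ((1:ℝ)/4) - 2)
        linarith
      rw [abs_mul]
      calc |hf d| * |Hr M - Real.log N| ≤ |hf d| * (4 * (d:ℝ) ^ ((1:ℝ)/4)) :=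
            mul_le_mul_of_nonneg_left hfinal (abs_nonneg _)
        _ = 4 * F d := by rw [F]; ring
    refine le_trans (Finset.sum_le_sum hterm) ?_
    rw [← Finset.mul_sum]
    have := sum_F_le_TF (Finset.Icc 1 N)
    linarith
  have habs2 : |(∑ d ∈ Finset.Icc 1 N, hf d) * Real.log N - Real.log N| ≤ 4 * TF := by
    have h1 : (∑ d ∈ Finset.Icc 1 N, hf d) * Real.log N - Real.log N
        = ((∑ d ∈ Finset.Icc 1 N, hf d) - 1) * Real.log N := by ring
    rw [h1, abs_mul, abs_of_nonneg (Real.log_nonneg hN1)]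
    have h2 := S_tail N hN
    have hNp : (0:ℝ) < (N:ℝ) ^ ((1:ℝ)/4) := Real.rpow_pos_of_pos hN0 _
    have h3 : Real.log N ≤ 4 * (N:ℝ) ^ ((1:ℝ)/4) := by
      have := log_le_rpow hN1
      linarith [Real.rpow_pos_of_pos hN0 ((1:ℝ)/4)]
    calc |(∑ d ∈ Finset.Icc 1 N, hf d) - 1| * Real.log N
        ≤ (TF / (N:ℝ) ^ ((1:ℝ)/4)) * (4 * (N:ℝ) ^ ((1:ℝ)/4)) := by
          apply mul_le_mul h2 h3 (Real.log_nonneg hN1) (by positivity)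
      _ = 4 * TF := by field_simp
  calc |(∑ d ∈ Finset.Icc 1 N, hf d * (Hr (N / d) - Real.log N)
        + (∑ d ∈ Finset.Icc 1 N, hf d) * Real.log N) - Real.log N|
      ≤ |∑ d ∈ Finset.Icc 1 N, hf d * (Hr (N / d) - Real.log N)|
        + |(∑ d ∈ Finset.Icc 1 N, hf d) * Real.log N - Real.log N| := by
        have := abs_add_le (∑ d ∈ Finset.Icc 1 N, hf d * (Hr (N / d) - Real.log N))
          ((∑ d ∈ Finset.Icc 1 N, hf d) * Real.log N - Real.log N)
        have heq : ∑ d ∈ Finset.Icc 1 N, hf d * (Hr (N / d) - Real.log N)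
            + ((∑ d ∈ Finset.Icc 1 N, hf d) * Real.log N - Real.log N)
            = (∑ d ∈ Finset.Icc 1 N, hf d * (Hr (N / d) - Real.log N)
              + (∑ d ∈ Finset.Icc 1 N, hf d) * Real.log N) - Real.log N := by ring
        rw [heq] at this
        exact this
    _ ≤ 8 * TF := by linarith

end GAsymp

/-- `G = ∑_{n ≤ N} μ(n)²/φ(n) = log N + O(1)`; in particular `G ∼ log N`. -/
theorem G_asymptotic :
    (∃ C : ℝ, ∀ N : ℕ, 1 ≤ N →
      |(∑ n ∈ Finset.Icc 1 N, (ArithmeticFunction.moebius n : ℝ) ^ 2 / Nat.totient n) -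
        Real.log N| ≤ C) ∧
    Filter.Tendsto (fun N : ℕ =>
        (∑ n ∈ Finset.Icc 1 N, (ArithmeticFunction.moebius n : ℝ) ^ 2 / Nat.totient n) /
          Real.log N)
      Filter.atTop (nhds 1) := by
  have hGdef : ∀ N : ℕ, (∑ n ∈ Finset.Icc 1 N,
      (ArithmeticFunction.moebius n : ℝ) ^ 2 / Nat.totient n) = GAsymp.G N := fun N => rfl
  constructor
  · exact ⟨8 * GAsymp.TF, fun N hN => by rw [hGdef]; exact GAsymp.main_bound N hN⟩
  · have hzero : Filter.Tendsto (fun N : ℕ => GAsymp.G N / Real.log N - 1)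
        Filter.atTop (nhds 0) := by
      have hlog : Filter.Tendsto (fun N : ℕ => Real.log N) Filter.atTop Filter.atTop :=
        Real.tendsto_log_atTop.comp tendsto_natCast_atTop_atTop
      have hgto : Filter.Tendsto (fun N : ℕ => (8 * GAsymp.TF) / Real.log N)
          Filter.atTop (nhds 0) :=
        Filter.Tendsto.div_atTop tendsto_const_nhds hlog
      apply squeeze_zero_norm' ?_ hgto
      filter_upwards [Filter.eventually_ge_atTop 3] with N hN
      have hN1 : 1 ≤ N := by omega
      have hlogpos : 0 < Real.log N := by
        apply Real.log_pos
        exact_mod_cast by omega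
      have h1 : GAsymp.G N / Real.log N - 1 = (GAsymp.G N - Real.log N) / Real.log N := by
        field_simp
      rw [Real.norm_eq_abs, h1, abs_div, abs_of_pos hlogpos]
      apply div_le_div_of_nonneg_right (GAsymp.main_bound N hN1) hlogpos.le
    have h2 := hzero.add_const 1
    simp only [sub_add_cancel, zero_add] at h2
    exact h2
end

section
/- Let N \ge 2 and let w : \{1,...,N\} \to \mathbb{C} be any sequence. Then |2 \sum_{p^{\alpha}\ell \le N, \alpha \ge 1} (\log p/p^{\alpha}) (\varphi(\ell)/\ell^2) \Re(w(\ell)\overline{w(p^{\alpha}\ell)})| \le (\log N + C \log\log N) \sum_{\ell \le N} (\varphi(\ell)/\ell^2) |w(\ell)|^2 for some absolute constant C, where the outer sum is over primes p, integers \alpha \ge 1, and \ell \ge 1 with p^{\alpha}\ell \le N. -/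
open Finset

section S1Aux
open ArithmeticFunction

lemma log_sq_le (N : ℕ) (hN : 1 ≤ N) : (Real.log N)^2 ≤ 16 * Real.sqrt N := by
  have h1 : (1:ℝ) ≤ (N:ℝ) := by exact_mod_cast hN
  have h0 : (0:ℝ) < (N:ℝ) := by linarith
  have hr : (0:ℝ) < (N:ℝ) ^ (4⁻¹:ℝ) := Real.rpow_pos_of_pos h0 _
  have hlog : Real.log N = 4 * Real.log ((N:ℝ) ^ (4⁻¹:ℝ)) := by
    rw [Real.log_rpow h0]; ring
  have hle : Real.log ((N:ℝ) ^ (4⁻¹:ℝ)) ≤ (N:ℝ) ^ (4⁻¹:ℝ) := by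
    have := Real.log_le_sub_one_of_pos hr
    linarith
  have hlognn : 0 ≤ Real.log ((N:ℝ) ^ (4⁻¹:ℝ)) := by
    apply Real.log_nonneg
    exact Real.one_le_rpow h1 (by norm_num)
  have hsq : ((N:ℝ) ^ (4⁻¹:ℝ))^2 = Real.sqrt N := by
    rw [← Real.rpow_natCast ((N:ℝ) ^ (4⁻¹:ℝ)) 2, ← Real.rpow_mul (le_of_lt h0),
      Real.sqrt_eq_rpow]
    norm_num
  calc (Real.log N)^2 = 16 * (Real.log ((N:ℝ) ^ (4⁻¹:ℝ)))^2 := by rw [hlog]; ring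
    _ ≤ 16 * ((N:ℝ) ^ (4⁻¹:ℝ))^2 := by nlinarith
    _ = 16 * Real.sqrt N := by rw [hsq]

lemma natSqrt_le (N : ℕ) : (N.sqrt : ℝ) ≤ Real.sqrt N := by
  rw [Real.le_sqrt (by positivity) (by positivity)]
  exact_mod_cast Nat.sqrt_le' N

lemma natLog_le (N : ℕ) (hN : 1 ≤ N) : (Nat.log 2 N : ℝ) ≤ 2 * Real.log N := by
  have h : (2:ℕ)^(Nat.log 2 N) ≤ N := Nat.pow_log_le_self 2 (by omega)
  have h2 : ((2:ℝ))^(Nat.log 2 N) ≤ (N:ℝ) := by exact_mod_cast h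
  have h3 : (Nat.log 2 N : ℝ) * Real.log 2 ≤ Real.log N := by
    rw [← Real.log_pow]
    exact Real.log_le_log (by positivity) h2
  have h4 : (0.6931471803:ℝ) < Real.log 2 := Real.log_two_gt_d9
  nlinarith

lemma theta_le_s16 (N : ℕ) : ∑ p ∈ (Finset.range (N+1)).filter Nat.Prime, Real.log p
    ≤ N * Real.log 4 := by
  have h2 : ∑ p ∈ (Finset.range (N+1)).filter Nat.Prime, Real.log p
      = Real.log (primorial N) := by
    rw [primorial, Nat.cast_prod, Real.log_prod]
    intro p hp
    simp only [Finset.mem_filter] at hp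
    exact_mod_cast hp.2.pos.ne'
  rw [h2]
  calc Real.log (primorial N) ≤ Real.log ((4:ℝ)^N) := by
        apply Real.log_le_log (by exact_mod_cast primorial_pos N)
        exact_mod_cast primorial_le_4_pow N
    _ = N * Real.log 4 := by rw [Real.log_pow]

lemma bad_card (N : ℕ) (hN : 1 ≤ N) :
    ((Finset.Icc 1 N).filter (fun n => IsPrimePow n ∧ ¬ n.Prime)).card
      ≤ N.sqrt * Nat.log 2 N := by
  classical
  have key : ∀ n ∈ (Finset.Icc 1 N).filter (fun n => IsPrimePow n ∧ ¬ n.Prime),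
      n.minFac.Prime ∧ 2 ≤ n.factorization n.minFac ∧
        n.minFac ^ n.factorization n.minFac = n ∧ n.minFac ≤ N.sqrt ∧
        n.factorization n.minFac ≤ Nat.log 2 N := by
    intro n hn
    simp only [Finset.mem_filter, Finset.mem_Icc] at hn
    obtain ⟨⟨hn1, hnN⟩, hpp, hnp⟩ := hn
    obtain ⟨p, k, hp, hk, rfl⟩ := hpp
    have hp' : p.Prime := hp.nat_prime
    have hk2 : 2 ≤ k := by
      by_contra h
      have hk1 : k = 1 := by omega
      rw [hk1, pow_one] at hnp
      exact hnp hp'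
    have hmf : (p^k).minFac = p := Nat.Prime.pow_minFac hp' (by omega)
    have hfz : (p^k).factorization (p^k).minFac = k := by
      rw [hmf, hp'.factorization_pow, Finsupp.single_eq_same]
    rw [hmf] at hfz ⊢
    refine ⟨hp', ?_, ?_, ?_, ?_⟩
    · rw [hfz]; exact hk2
    · rw [hfz]
    · rw [Nat.le_sqrt]
      calc p * p = p^2 := (sq p).symm
        _ ≤ p^k := Nat.pow_le_pow_right hp'.pos hk2
        _ ≤ N := hnN
    · rw [hfz, Nat.le_log_iff_pow_le (by norm_num) (by omega)]
      calc 2^k ≤ p^k := Nat.pow_le_pow_left hp'.two_le k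
        _ ≤ N := hnN
  calc ((Finset.Icc 1 N).filter (fun n => IsPrimePow n ∧ ¬ n.Prime)).card
      ≤ ((Finset.Icc 2 N.sqrt) ×ˢ (Finset.Icc 2 (Nat.log 2 N))).card := by
        apply Finset.card_le_card_of_injOn
          (fun n => (n.minFac, n.factorization n.minFac))
        · intro n hn
          obtain ⟨hp, hk2, hrep, hps, hkl⟩ := key n hn
          simp only [Finset.mem_product, Finset.mem_Icc]
          exact Finset.mem_product.mpr ⟨Finset.mem_Icc.mpr ⟨hp.two_le, hps⟩, Finset.mem_Icc.mpr ⟨hk2, hkl⟩⟩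
        · intro a ha b hb hab
          obtain ⟨_, _, hra, _, _⟩ := key a ha
          obtain ⟨_, _, hrb, _, _⟩ := key b hb
          simp only [Prod.mk.injEq] at hab
          rw [← hra, ← hrb, hab.2, hab.1]
    _ ≤ N.sqrt * Nat.log 2 N := by
        rw [Finset.card_product, Nat.card_Icc, Nat.card_Icc]
        exact Nat.mul_le_mul (by omega) (by omega)

lemma psi_le (N : ℕ) (hN : 1 ≤ N) :
    ∑ n ∈ Finset.Icc 1 N, vonMangoldt n ≤ 66 * N := by
  classical
  have hsplit := Finset.sum_filter_add_sum_filter_not (Finset.Icc 1 N) Nat.Prime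
    (fun n => vonMangoldt n)
  have hprime : ∑ n ∈ (Finset.Icc 1 N).filter Nat.Prime, vonMangoldt n
      ≤ N * Real.log 4 := by
    have he : (Finset.Icc 1 N).filter Nat.Prime = (Finset.range (N+1)).filter Nat.Prime := by
      ext p
      simp only [Finset.mem_filter, Finset.mem_Icc, Finset.mem_range]
      constructor
      · rintro ⟨⟨h1, h2⟩, hp⟩; exact ⟨by omega, hp⟩
      · rintro ⟨h1, hp⟩; exact ⟨⟨hp.one_lt.le, by omega⟩, hp⟩
    rw [he]
    calc ∑ p ∈ (Finset.range (N+1)).filter Nat.Prime, vonMangoldt p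
        = ∑ p ∈ (Finset.range (N+1)).filter Nat.Prime, Real.log p := by
          apply Finset.sum_congr rfl
          intro p hp
          exact vonMangoldt_apply_prime (Finset.mem_filter.mp hp).2
      _ ≤ N * Real.log 4 := theta_le_s16 N
  have hbad : ∑ n ∈ (Finset.Icc 1 N).filter (fun n => ¬ n.Prime), vonMangoldt n
      ≤ 2 * Real.sqrt N * (Real.log N)^2 * 2 := by
    have hsub : (Finset.Icc 1 N).filter (fun n => IsPrimePow n ∧ ¬ n.Prime)
        ⊆ (Finset.Icc 1 N).filter (fun n => ¬ n.Prime) := by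
      intro n hn
      simp only [Finset.mem_filter] at hn ⊢
      exact ⟨hn.1, hn.2.2⟩
    have heq : ∑ n ∈ (Finset.Icc 1 N).filter (fun n => ¬ n.Prime), vonMangoldt n
        = ∑ n ∈ (Finset.Icc 1 N).filter (fun n => IsPrimePow n ∧ ¬ n.Prime),
            vonMangoldt n := by
      symm
      apply Finset.sum_subset hsub
      intro x hx hx2
      simp only [Finset.mem_filter] at hx hx2
      by_contra h
      exact hx2 ⟨hx.1, (vonMangoldt_ne_zero_iff.mp h), hx.2⟩
    rw [heq]
    have hcard := bad_card N hN
    have hbound : ∀ n ∈ (Finset.Icc 1 N).filter (fun n => IsPrimePow n ∧ ¬ n.Prime),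
        vonMangoldt n ≤ Real.log N := by
      intro n hn
      simp only [Finset.mem_filter, Finset.mem_Icc] at hn
      exact vonMangoldt_le_log.trans (Real.log_le_log (by exact_mod_cast hn.1.1)
        (by exact_mod_cast hn.1.2))
    calc ∑ n ∈ (Finset.Icc 1 N).filter (fun n => IsPrimePow n ∧ ¬ n.Prime), vonMangoldt n
        ≤ ((Finset.Icc 1 N).filter (fun n => IsPrimePow n ∧ ¬ n.Prime)).card * Real.log N := by
          have := Finset.sum_le_card_nsmul _ _ _ hbound
          simpa using this
      _ ≤ (N.sqrt * Nat.log 2 N : ℕ) * Real.log N := by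
          apply mul_le_mul_of_nonneg_right _ (Real.log_natCast_nonneg N)
          exact_mod_cast hcard
      _ ≤ (Real.sqrt N * (2 * Real.log N)) * Real.log N := by
          apply mul_le_mul_of_nonneg_right _ (Real.log_natCast_nonneg N)
          push_cast
          apply mul_le_mul (natSqrt_le N) (natLog_le N hN) (by positivity) (Real.sqrt_nonneg _)
      _ ≤ 2 * Real.sqrt N * (Real.log N)^2 * 2 := by
          nlinarith [Real.sqrt_nonneg (N:ℝ), Real.log_natCast_nonneg N]
  have hlogsq := log_sq_le N hN
  have hsqrtsq : Real.sqrt N * Real.sqrt N = N := Real.mul_self_sqrt (by positivity)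
  have hlog4 : Real.log 4 ≤ 2 := by
    rw [show (4:ℝ) = 2^2 by norm_num, Real.log_pow]
    have := Real.log_two_lt_d9
    push_cast
    nlinarith
  have hN1 : (1:ℝ) ≤ N := by exact_mod_cast hN
  have hsq : 2 * Real.sqrt N * (Real.log N)^2 * 2 ≤ 64 * N := by
    have h1 : Real.sqrt N * (Real.log N)^2 ≤ Real.sqrt N * (16 * Real.sqrt N) :=
      mul_le_mul_of_nonneg_left hlogsq (Real.sqrt_nonneg _)
    nlinarith [Real.sqrt_nonneg (N:ℝ)]
  have hfin : (N:ℝ) * Real.log 4 ≤ 2 * N := by nlinarith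
  linarith

lemma sum_log_eq (N : ℕ) :
    ∑ n ∈ Finset.Icc 1 N, vonMangoldt n * ((N / n : ℕ) : ℝ)
      = ∑ m ∈ Finset.Icc 1 N, Real.log m := by
  classical
  have hdiv : ∀ m ∈ Finset.Icc 1 N, (Real.log m : ℝ)
      = ∑ d ∈ Finset.Icc 1 N, (if d ∣ m then vonMangoldt d else 0) := by
    intro m hm
    simp only [Finset.mem_Icc] at hm
    rw [← Finset.sum_filter]
    have he : (Finset.Icc 1 N).filter (· ∣ m) = m.divisors := by
      ext d
      simp only [Finset.mem_filter, Finset.mem_Icc, Nat.mem_divisors]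
      constructor
      · rintro ⟨⟨h1, h2⟩, h3⟩; exact ⟨h3, by omega⟩
      · rintro ⟨h1, h2⟩
        exact ⟨⟨Nat.pos_of_dvd_of_pos h1 (by omega), (Nat.le_of_dvd (by omega) h1).trans hm.2⟩, h1⟩
    rw [he, vonMangoldt_sum]
  rw [Finset.sum_congr rfl hdiv, Finset.sum_comm]
  apply Finset.sum_congr rfl
  intro d hd
  rw [← Finset.sum_filter, Finset.sum_const]
  have hc : ((Finset.Icc 1 N).filter (fun m => d ∣ m)).card = N / d := by
    rw [show Finset.Icc 1 N = Finset.Ioc 0 N from rfl]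
    exact Nat.Ioc_filter_dvd_card_eq_div N d
  rw [hc, nsmul_eq_mul, mul_comm]

lemma mertens (N : ℕ) (hN : 1 ≤ N) :
    ∑ n ∈ Finset.Icc 1 N, vonMangoldt n / n ≤ Real.log N + 66 := by
  have hN0 : (0:ℝ) < N := by exact_mod_cast hN
  have key : ∀ n ∈ Finset.Icc 1 N,
      vonMangoldt n / n * N ≤ vonMangoldt n * ((N / n : ℕ) : ℝ) + vonMangoldt n := by
    intro n hn
    simp only [Finset.mem_Icc] at hn
    have hn0 : (0:ℝ) < n := by exact_mod_cast hn.1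
    have hfloor : (N:ℝ) ≤ ((N / n : ℕ) : ℝ) * n + n := by
      have hd : N < (N / n + 1) * n := by
        have h1 := Nat.div_add_mod N n
        have h2 := Nat.mod_lt N (show 0 < n by omega)
        nlinarith
      have : (N:ℝ) < ((N / n + 1 : ℕ) : ℝ) * n := by exact_mod_cast hd
      push_cast at this
      nlinarith
    have hΛ : (0:ℝ) ≤ vonMangoldt n := vonMangoldt_nonneg
    rw [div_mul_eq_mul_div, div_le_iff₀ hn0] at *
    nlinarith
  have h1 : (∑ n ∈ Finset.Icc 1 N, vonMangoldt n / n) * N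
      ≤ ∑ m ∈ Finset.Icc 1 N, Real.log m + ∑ n ∈ Finset.Icc 1 N, vonMangoldt n := by
    rw [Finset.sum_mul, ← sum_log_eq, ← Finset.sum_add_distrib]
    exact Finset.sum_le_sum key
  have h2 : ∑ m ∈ Finset.Icc 1 N, Real.log m ≤ N * Real.log N := by
    have := Finset.sum_le_card_nsmul (Finset.Icc 1 N) (fun m => Real.log m) (Real.log N)
      (fun m hm => by
        simp only [Finset.mem_Icc] at hm
        exact Real.log_le_log (by exact_mod_cast hm.1) (by exact_mod_cast hm.2))
    simpa [Nat.card_Icc] using this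
  have h3 := psi_le N hN
  have h4 : (∑ n ∈ Finset.Icc 1 N, vonMangoldt n / n) * N ≤ (Real.log N + 66) * N := by
    calc (∑ n ∈ Finset.Icc 1 N, vonMangoldt n / n) * N
        ≤ N * Real.log N + 66 * N := by linarith
      _ = (Real.log N + 66) * N := by ring
  exact le_of_mul_le_mul_right h4 hN0

lemma pairs_le (N K : ℕ) (hK : 1 ≤ K) :
    ∑ p ∈ (Finset.range (N+1)).filter Nat.Prime, ∑ α ∈ Finset.Icc 1 N,
      (if p^α ≤ K then Real.log p / (p:ℝ)^α else 0) ≤ Real.log K + 66 := by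
  classical
  set s := (((Finset.range (N+1)).filter Nat.Prime) ×ˢ Finset.Icc 1 N).filter
    (fun q : ℕ × ℕ => q.1 ^ q.2 ≤ K) with hs
  have hprop : ∀ q ∈ s, q.1.Prime ∧ 1 ≤ q.2 ∧ q.1 ^ q.2 ≤ K := by
    intro q hq
    simp only [hs, Finset.mem_filter, Finset.mem_product, Finset.mem_Icc,
      Finset.mem_range] at hq
    exact ⟨hq.1.1.2, hq.1.2.1, hq.2⟩
  have hrw : ∑ p ∈ (Finset.range (N+1)).filter Nat.Prime, ∑ α ∈ Finset.Icc 1 N,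
      (if p^α ≤ K then Real.log p / (p:ℝ)^α else 0)
      = ∑ q ∈ s, Real.log q.1 / (q.1:ℝ)^q.2 := by
    calc ∑ p ∈ (Finset.range (N+1)).filter Nat.Prime, ∑ α ∈ Finset.Icc 1 N,
        (if p^α ≤ K then Real.log p / (p:ℝ)^α else 0)
        = ∑ q ∈ ((Finset.range (N+1)).filter Nat.Prime) ×ˢ Finset.Icc 1 N,
            (if q.1 ^ q.2 ≤ K then Real.log q.1 / (q.1:ℝ)^q.2 else 0) :=
          (Finset.sum_product _ _ (fun q : ℕ × ℕ =>
            if q.1 ^ q.2 ≤ K then Real.log q.1 / (q.1:ℝ)^q.2 else 0)).symm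
      _ = ∑ q ∈ s, Real.log q.1 / (q.1:ℝ)^q.2 := (Finset.sum_filter _ _).symm
  rw [hrw]
  have hinj : ∀ x ∈ s, ∀ y ∈ s, x.1 ^ x.2 = y.1 ^ y.2 → x = y := by
    intro x hx y hy hxy
    obtain ⟨hxp, hx1, -⟩ := hprop x hx
    obtain ⟨hyp, hy1, -⟩ := hprop y hy
    have hpq : x.1 = y.1 := by
      have h1 : (x.1 ^ x.2).minFac = x.1 := Nat.Prime.pow_minFac hxp (by omega)
      have h2 : (y.1 ^ y.2).minFac = y.1 := Nat.Prime.pow_minFac hyp (by omega)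
      rw [← h1, ← h2, hxy]
    have hab : x.2 = y.2 := by
      apply Nat.pow_right_injective hxp.two_le
      show x.1 ^ x.2 = x.1 ^ y.2
      rw [hxy, hpq]
    exact Prod.ext hpq hab
  have himg : ∑ q ∈ s, Real.log q.1 / (q.1:ℝ)^q.2
      = ∑ n ∈ s.image (fun q : ℕ × ℕ => q.1 ^ q.2), vonMangoldt n / n := by
    rw [Finset.sum_image hinj]
    apply Finset.sum_congr rfl
    intro q hq
    obtain ⟨hqp, hq1, -⟩ := hprop q hq
    rw [vonMangoldt_apply_pow (by omega), vonMangoldt_apply_prime hqp]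
    push_cast
    rfl
  rw [himg]
  have hsub : s.image (fun q : ℕ × ℕ => q.1 ^ q.2) ⊆ Finset.Icc 1 K := by
    intro n hn
    simp only [Finset.mem_image] at hn
    obtain ⟨q, hq, rfl⟩ := hn
    obtain ⟨hqp, hq1, hqK⟩ := hprop q hq
    simp only [Finset.mem_Icc]
    exact ⟨Nat.one_le_iff_ne_zero.mpr (pow_ne_zero _ hqp.pos.ne'), hqK⟩
  calc ∑ n ∈ s.image (fun q : ℕ × ℕ => q.1 ^ q.2), vonMangoldt n / n
      ≤ ∑ n ∈ Finset.Icc 1 K, vonMangoldt n / n := by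
        apply Finset.sum_le_sum_of_subset_of_nonneg hsub
        intro n _ _
        have h1 : (0:ℝ) ≤ vonMangoldt n := vonMangoldt_nonneg
        positivity
    _ ≤ Real.log K + 66 := mertens K hK

lemma totient_pow_mul {p : ℕ} (hp : p.Prime) (α : ℕ) {ℓ : ℕ} (hd : p ∣ ℓ) :
    (p^α * ℓ).totient = p^α * ℓ.totient := by
  induction α with
  | zero => simp
  | succ n ih =>
      have h1 : p^(n+1) * ℓ = p * (p^n * ℓ) := by ring
      rw [h1, Nat.totient_mul_of_prime_of_dvd hp (Dvd.dvd.mul_left hd _), ih]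
      ring

lemma tot_lt {p α m : ℕ} (hp : p.Prime) (hm : m ≠ 0) (hlt : α < m.factorization p) :
    ((m / p^α).totient : ℝ) * (p:ℝ)^α = (m.totient : ℝ) := by
  have hα : p ^ α ∣ m :=
    (Nat.Prime.pow_dvd_iff_le_factorization hp hm).mpr hlt.le
  have hα1 : p ^ (α+1) ∣ m :=
    (Nat.Prime.pow_dvd_iff_le_factorization hp hm).mpr hlt
  have hdvd : p ∣ m / p ^ α := by
    have : p ^ α * p ∣ m := by rw [← pow_succ]; exact hα1
    exact (Nat.dvd_div_iff_mul_dvd hα).mpr (by rwa [mul_comm] at this)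
  have hrep : p ^ α * (m / p ^ α) = m := Nat.mul_div_cancel' hα
  have hnat : m.totient = p ^ α * (m / p ^ α).totient := by
    rw [← hrep, totient_pow_mul hp α hdvd, hrep]
  rw [hnat]
  push_cast
  ring

lemma tot_eq {p m : ℕ} (hp : p.Prime) (hm : m ≠ 0) (hv : 1 ≤ m.factorization p) :
    (m.totient : ℝ) = ((p:ℝ)^(m.factorization p - 1) * ((p:ℝ) - 1)) *
      ((m / p^(m.factorization p)).totient : ℝ) := by
  set v := m.factorization p with hvdef
  have hco : Nat.Coprime (p ^ v) (m / p ^ v) :=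
    Nat.Coprime.pow_left _ (Nat.coprime_ordCompl hp hm)
  have hrep : p ^ v * (m / p ^ v) = m := Nat.mul_div_cancel' (Nat.ordProj_dvd m p)
  have hnat : m.totient = (p^(v-1) * (p-1)) * (m / p ^ v).totient := by
    conv_lhs => rw [← hrep]
    rw [Nat.totient_mul hco, Nat.totient_prime_pow hp (by omega)]
  rw [hnat]
  have h2 : (2:ℕ) ≤ p := hp.two_le
  push_cast [Nat.cast_sub (by omega : 1 ≤ p)]
  ring

lemma log_eq_sum (m : ℕ) (hm : m ≠ 0) :
    Real.log m = ∑ p ∈ m.primeFactors, (m.factorization p : ℝ) * Real.log p := by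
  conv_lhs => rw [← Nat.factorization_prod_pow_eq_self hm]
  rw [Finsupp.prod, Nat.cast_prod, Real.log_prod, Nat.support_factorization]
  · apply Finset.sum_congr rfl
    intro p hp
    rw [Nat.cast_pow, Real.log_pow]
  · intro p hp
    have hp' : p.Prime := Nat.prime_of_mem_primeFactors (by rwa [Nat.support_factorization] at hp)
    exact_mod_cast pow_ne_zero _ hp'.pos.ne'

lemma inner_alpha (N m p : ℕ) (hm1 : 1 ≤ m) (hmN : m ≤ N) (hp : p.Prime) :
    ∑ α ∈ Finset.Icc 1 N, (if p ^ α ∣ m then Real.log p / (p:ℝ)^α *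
        (((m / p^α).totient : ℝ) / ((m / p^α : ℕ) : ℝ)^2) else 0)
      ≤ (m.totient : ℝ) / (m:ℝ)^2 *
          ((m.factorization p : ℝ) * Real.log p
            + (if p ∣ m then Real.log p / ((p:ℝ) - 1) else 0)) := by
  classical
  set v := m.factorization p with hvdef
  have hm0 : m ≠ 0 := by omega
  by_cases hpm : p ∣ m
  · have hv1 : 1 ≤ v := (Nat.Prime.factorization_pos_of_dvd hp hm0 hpm)
    have hvN : v ≤ N := le_trans (Nat.factorization_lt p hm0).le hmN
    have hp1 : (1:ℝ) < (p:ℝ) := by exact_mod_cast hp.one_lt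
    have hppos : (0:ℝ) < (p:ℝ) := by linarith
    have hmpos : (0:ℝ) < (m:ℝ) := by exact_mod_cast hm1
    have hlogp : (0:ℝ) ≤ Real.log p := Real.log_natCast_nonneg p
    -- restrict to Icc 1 v
    have hstep1 : ∑ α ∈ Finset.Icc 1 N, (if p ^ α ∣ m then Real.log p / (p:ℝ)^α *
        (((m / p^α).totient : ℝ) / ((m / p^α : ℕ) : ℝ)^2) else 0)
        = ∑ α ∈ Finset.Icc 1 v, (if p ^ α ∣ m then Real.log p / (p:ℝ)^α *
        (((m / p^α).totient : ℝ) / ((m / p^α : ℕ) : ℝ)^2) else 0) := by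
      symm
      apply Finset.sum_subset (Finset.Icc_subset_Icc_right hvN)
      intro α hα hα'
      simp only [Finset.mem_Icc] at hα hα'
      have hnd : ¬ p ^ α ∣ m := by
        rw [Nat.Prime.pow_dvd_iff_le_factorization hp hm0]
        omega
      rw [if_neg hnd]
    rw [hstep1]
    have hstep2 : ∀ α ∈ Finset.Icc 1 v, (if p ^ α ∣ m then Real.log p / (p:ℝ)^α *
        (((m / p^α).totient : ℝ) / ((m / p^α : ℕ) : ℝ)^2) else 0)
        ≤ (m.totient : ℝ) / (m:ℝ)^2 *
          (Real.log p + (if α = v then Real.log p / ((p:ℝ) - 1) else 0)) := by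
      intro α hα
      simp only [Finset.mem_Icc] at hα
      have hαd : p ^ α ∣ m := (Nat.Prime.pow_dvd_iff_le_factorization hp hm0).mpr hα.2
      rw [if_pos hαd]
      have hcast : ((m / p^α : ℕ) : ℝ) = (m:ℝ) / (p:ℝ)^α := by
        rw [Nat.cast_div hαd (by exact_mod_cast pow_ne_zero α hp.pos.ne')]
        push_cast
        rfl
      rcases eq_or_lt_of_le hα.2 with heq | hlt
      · -- α = v
        rw [if_pos heq, hcast]
        have htot := tot_eq hp hm0 hv1
        rw [← hvdef] at htot
        rw [← heq] at htot
        have hpv : (0:ℝ) < (p:ℝ)^α := by positivity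
        have hp1' : (p:ℝ) - 1 > 0 := by linarith
        have hpow : (p:ℝ)^(α-1) * (p:ℝ) = (p:ℝ)^α := by
          rw [← pow_succ]
          congr 1
          omega
        rw [htot, ← hpow]
        apply le_of_eq
        field_simp
        ring
      · -- α < v
        rw [if_neg (by omega), hcast]
        have htot := tot_lt hp hm0 (by rwa [← hvdef])
        have hpv : (0:ℝ) < (p:ℝ)^α := by positivity
        rw [← htot]
        apply le_of_eq
        field_simp
        ring
    calc ∑ α ∈ Finset.Icc 1 v, (if p ^ α ∣ m then Real.log p / (p:ℝ)^α *
        (((m / p^α).totient : ℝ) / ((m / p^α : ℕ) : ℝ)^2) else 0)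
        ≤ ∑ α ∈ Finset.Icc 1 v, (m.totient : ℝ) / (m:ℝ)^2 *
          (Real.log p + (if α = v then Real.log p / ((p:ℝ) - 1) else 0)) :=
          Finset.sum_le_sum hstep2
      _ = (m.totient : ℝ) / (m:ℝ)^2 * ((v : ℝ) * Real.log p + Real.log p / ((p:ℝ) - 1)) := by
          rw [← Finset.mul_sum]
          congr 1
          rw [Finset.sum_add_distrib, Finset.sum_const, Finset.sum_ite_eq' (Finset.Icc 1 v) v,
            if_pos (show v ∈ Finset.Icc 1 v by simp only [Finset.mem_Icc]; omega), Nat.card_Icc,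
            Nat.add_sub_cancel, nsmul_eq_mul]
      _ = (m.totient : ℝ) / (m:ℝ)^2 *
          ((m.factorization p : ℝ) * Real.log p
            + (if p ∣ m then Real.log p / ((p:ℝ) - 1) else 0)) := by
          rw [if_pos hpm, ← hvdef]
  · -- p does not divide m
    have hv0 : v = 0 := Nat.factorization_eq_zero_of_not_dvd hpm
    have hzero : ∀ α ∈ Finset.Icc 1 N, (if p ^ α ∣ m then Real.log p / (p:ℝ)^α *
        (((m / p^α).totient : ℝ) / ((m / p^α : ℕ) : ℝ)^2) else 0) = 0 := by
      intro α hα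
      simp only [Finset.mem_Icc] at hα
      have : ¬ p ^ α ∣ m := fun h => hpm (dvd_trans (dvd_pow_self p (by omega)) h)
      rw [if_neg this]
    rw [Finset.sum_congr rfl hzero, Finset.sum_const, smul_zero]
    rw [if_neg hpm, hv0]
    simp

lemma G_le (N m : ℕ) (hm1 : 1 ≤ m) (hmN : m ≤ N) :
    ∑ p ∈ (Finset.range (N+1)).filter Nat.Prime, ∑ α ∈ Finset.Icc 1 N,
      (if p ^ α ∣ m then Real.log p / (p:ℝ)^α *
        (((m / p^α).totient : ℝ) / ((m / p^α : ℕ) : ℝ)^2) else 0)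
      ≤ (m.totient : ℝ) / (m:ℝ)^2 *
          (Real.log m + ∑ p ∈ m.primeFactors, Real.log p / ((p:ℝ)-1)) := by
  classical
  have hm0 : m ≠ 0 := by omega
  calc ∑ p ∈ (Finset.range (N+1)).filter Nat.Prime, ∑ α ∈ Finset.Icc 1 N,
      (if p ^ α ∣ m then Real.log p / (p:ℝ)^α *
        (((m / p^α).totient : ℝ) / ((m / p^α : ℕ) : ℝ)^2) else 0)
      ≤ ∑ p ∈ (Finset.range (N+1)).filter Nat.Prime, (m.totient : ℝ) / (m:ℝ)^2 *
          ((m.factorization p : ℝ) * Real.log p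
            + (if p ∣ m then Real.log p / ((p:ℝ) - 1) else 0)) := by
        apply Finset.sum_le_sum
        intro p hp
        exact inner_alpha N m p hm1 hmN (Finset.mem_filter.mp hp).2
    _ = ∑ p ∈ m.primeFactors, (m.totient : ℝ) / (m:ℝ)^2 *
          ((m.factorization p : ℝ) * Real.log p
            + (if p ∣ m then Real.log p / ((p:ℝ) - 1) else 0)) := by
        symm
        apply Finset.sum_subset
        · intro p hp
          have h1 := Nat.prime_of_mem_primeFactors hp
          have h2 := Nat.dvd_of_mem_primeFactors hp
          simp only [Finset.mem_filter, Finset.mem_range]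
          exact ⟨by have := Nat.le_of_dvd (by omega) h2; omega, h1⟩
        · intro p hp hp'
          have hpp : p.Prime := (Finset.mem_filter.mp hp).2
          have hnd : ¬ p ∣ m := by
            intro hd
            exact hp' (Nat.mem_primeFactors.mpr ⟨hpp, hd, hm0⟩)
          rw [if_neg hnd, Nat.factorization_eq_zero_of_not_dvd hnd]
          simp
    _ = (m.totient : ℝ) / (m:ℝ)^2 *
          (Real.log m + ∑ p ∈ m.primeFactors, Real.log p / ((p:ℝ)-1)) := by
        rw [← Finset.mul_sum]
        congr 1
        rw [Finset.sum_add_distrib, log_eq_sum m hm0]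
        congr 1
        apply Finset.sum_congr rfl
        intro p hp
        rw [if_pos (Nat.dvd_of_mem_primeFactors hp)]

lemma omega_le (m : ℕ) (hm : m ≠ 0) : (m.primeFactors.card : ℝ) ≤ 2 * Real.log m := by
  have h2 : (2:ℕ) ^ m.primeFactors.card ≤ m := by
    calc (2:ℕ) ^ m.primeFactors.card = ∏ p ∈ m.primeFactors, 2 := by
          rw [Finset.prod_const]
      _ ≤ ∏ p ∈ m.primeFactors, p :=
          Finset.prod_le_prod' (fun p hp => (Nat.prime_of_mem_primeFactors hp).two_le)
      _ ≤ m := Nat.le_of_dvd (by omega) (Nat.prod_primeFactors_dvd m)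
  have h3 : ((2:ℝ)) ^ m.primeFactors.card ≤ (m:ℝ) := by exact_mod_cast h2
  have h4 : (m.primeFactors.card : ℝ) * Real.log 2 ≤ Real.log m := by
    rw [← Real.log_pow]
    exact Real.log_le_log (by positivity) h3
  have h5 := Real.log_two_gt_d9
  nlinarith

lemma rad_le (N m : ℕ) (hN : 2 ≤ N) (hm1 : 1 ≤ m) (hmN : m ≤ N) :
    ∑ p ∈ m.primeFactors, Real.log p / ((p:ℝ)-1)
      ≤ 144 + 6 * |Real.log (Real.log N)| := by
  classical
  have hm0 : m ≠ 0 := by omega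
  set L : ℕ := ⌈Real.log m⌉₊ + 3 with hLdef
  have hL3 : 3 ≤ L := by omega
  have hL1 : 1 ≤ L := by omega
  have hLpos : (0:ℝ) < L := by exact_mod_cast hL1
  have hlogm_nonneg : 0 ≤ Real.log m := Real.log_natCast_nonneg m
  have hLlow : Real.log m ≤ (L:ℝ) := by
    calc Real.log m ≤ (⌈Real.log m⌉₊ : ℝ) := Nat.le_ceil _
      _ ≤ (L:ℝ) := by rw [hLdef]; push_cast; linarith
  have hLle : (L:ℝ) ≤ Real.log m + 4 := by
    have hc : (⌈Real.log m⌉₊ : ℝ) < Real.log m + 1 := Nat.ceil_lt_add_one hlogm_nonneg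
    have : (L:ℝ) = (⌈Real.log m⌉₊ : ℝ) + 3 := by rw [hLdef]; push_cast; ring
    linarith
  -- half bound: log p / (p-1) ≤ 2 * (log p / p) for p prime
  have hhalf : ∀ p : ℕ, p.Prime → Real.log p / ((p:ℝ)-1) ≤ 2 * (Real.log p / p) := by
    intro p hp
    have h2 : (2:ℝ) ≤ p := by exact_mod_cast hp.two_le
    have hlogp : (0:ℝ) ≤ Real.log p := Real.log_natCast_nonneg p
    rw [show 2 * (Real.log p / p) = (2 * Real.log p)/(p:ℝ) by ring,
      div_le_div_iff₀ (by linarith) (by linarith)]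
    nlinarith
  -- split
  rw [← Finset.sum_filter_add_sum_filter_not m.primeFactors (fun p => p ≤ L)]
  have hsmall : ∑ p ∈ m.primeFactors.filter (fun p => p ≤ L), Real.log p / ((p:ℝ)-1)
      ≤ 2 * Real.log L + 132 := by
    calc ∑ p ∈ m.primeFactors.filter (fun p => p ≤ L), Real.log p / ((p:ℝ)-1)
        ≤ ∑ p ∈ m.primeFactors.filter (fun p => p ≤ L), 2 * (vonMangoldt p / p) := by
          apply Finset.sum_le_sum
          intro p hp
          have hpp := Nat.prime_of_mem_primeFactors (Finset.mem_filter.mp hp).1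
          rw [vonMangoldt_apply_prime hpp]
          exact hhalf p hpp
      _ ≤ ∑ n ∈ Finset.Icc 1 L, 2 * (vonMangoldt n / n) := by
          apply Finset.sum_le_sum_of_subset_of_nonneg
          · intro p hp
            simp only [Finset.mem_filter] at hp
            have hpp := Nat.prime_of_mem_primeFactors hp.1
            simp only [Finset.mem_Icc]
            exact ⟨hpp.pos, hp.2⟩
          · intro n _ _
            have : (0:ℝ) ≤ vonMangoldt n := vonMangoldt_nonneg
            positivity
      _ = 2 * ∑ n ∈ Finset.Icc 1 L, vonMangoldt n / n := by rw [Finset.mul_sum]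
      _ ≤ 2 * (Real.log L + 66) := by
          have := mertens L hL1
          linarith
      _ = 2 * Real.log L + 132 := by ring
  have hbig : ∑ p ∈ m.primeFactors.filter (fun p => ¬ p ≤ L), Real.log p / ((p:ℝ)-1)
      ≤ 4 * Real.log L := by
    have hLe : Real.exp 1 ≤ (L:ℝ) := by
      have := Real.exp_one_lt_d9
      have h3 : (3:ℝ) ≤ L := by exact_mod_cast hL3
      linarith
    have hbound : ∀ p ∈ m.primeFactors.filter (fun p => ¬ p ≤ L),
        Real.log p / ((p:ℝ)-1) ≤ 2 * (Real.log L / L) := by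
      intro p hp
      simp only [Finset.mem_filter, not_le] at hp
      have hpp := Nat.prime_of_mem_primeFactors hp.1
      have hpL : (L:ℝ) ≤ (p:ℝ) := by exact_mod_cast hp.2.le
      have hmono := Real.log_div_self_antitoneOn (a := (L:ℝ)) (b := (p:ℝ))
        (by simpa using hLe) (by simp; linarith) hpL
      calc Real.log p / ((p:ℝ)-1) ≤ 2 * (Real.log p / p) := hhalf p hpp
        _ ≤ 2 * (Real.log L / L) := by simpa using by linarith [hmono]
    calc ∑ p ∈ m.primeFactors.filter (fun p => ¬ p ≤ L), Real.log p / ((p:ℝ)-1)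
        ≤ (m.primeFactors.filter (fun p => ¬ p ≤ L)).card • (2 * (Real.log L / L)) :=
          Finset.sum_le_card_nsmul _ _ _ hbound
      _ = ((m.primeFactors.filter (fun p => ¬ p ≤ L)).card : ℝ) * (2 * (Real.log L / L)) := by
          rw [nsmul_eq_mul]
      _ ≤ (2 * Real.log m) * (2 * (Real.log L / L)) := by
          apply mul_le_mul_of_nonneg_right
          · calc ((m.primeFactors.filter (fun p => ¬ p ≤ L)).card : ℝ)
                ≤ (m.primeFactors.card : ℝ) := by
                  exact_mod_cast Finset.card_le_card (Finset.filter_subset _ _)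
              _ ≤ 2 * Real.log m := omega_le m hm0
          · have : (0:ℝ) ≤ Real.log L := Real.log_natCast_nonneg L
            positivity
      _ ≤ 4 * Real.log L := by
          have hlogL : (0:ℝ) ≤ Real.log L := Real.log_natCast_nonneg L
          have hq : Real.log m / L ≤ 1 := div_le_one_of_le₀ hLlow (le_of_lt hLpos)
          have h2 : 2 * Real.log m * (2 * (Real.log L / L)) = 4 * (Real.log m / L) * Real.log L := by
            field_simp
            ring
          have hq0 : 0 ≤ Real.log m / L := by positivity
          nlinarith
  -- now log L ≤ 2 + |log log N|
  have hfin : Real.log L ≤ 2 + |Real.log (Real.log N)| := by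
    have hmN' : Real.log m ≤ Real.log N := Real.log_le_log (by exact_mod_cast hm1)
      (by exact_mod_cast hmN)
    have hL2 : (L:ℝ) ≤ Real.log N + 4 := by linarith
    have hlog5 : Real.log 5 ≤ 2 := by
      rw [Real.log_le_iff_le_exp (by norm_num), show (2:ℝ) = 1 + 1 by norm_num, Real.exp_add]
      nlinarith [Real.exp_one_gt_d9]
    by_cases hcase : Real.log N ≤ 1
    · calc Real.log L ≤ Real.log 5 := Real.log_le_log hLpos (by linarith)
        _ ≤ 2 := hlog5
        _ ≤ 2 + |Real.log (Real.log N)| := by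
            have := abs_nonneg (Real.log (Real.log N)); linarith
    · push_neg at hcase
      calc Real.log L ≤ Real.log (5 * Real.log N) :=
            Real.log_le_log hLpos (by linarith)
        _ = Real.log 5 + Real.log (Real.log N) := Real.log_mul (by norm_num) (by linarith)
        _ ≤ 2 + |Real.log (Real.log N)| := by
            have := le_abs_self (Real.log (Real.log N))
            linarith
  have hlogLnn : (0:ℝ) ≤ Real.log L := Real.log_natCast_nonneg L
  nlinarith [abs_nonneg (Real.log (Real.log N))]

lemma abs_loglog_ge (N : ℕ) (hN : 2 ≤ N) : (0.08:ℝ) ≤ |Real.log (Real.log N)| := by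
  rcases eq_or_lt_of_le hN with h2 | h3
  · -- N = 2
    have hlog2 : Real.log 2 < 0.7 := by
      have := Real.log_two_lt_d9
      linarith
    have hpos : (0:ℝ) < Real.log 2 := Real.log_pos (by norm_num)
    have h : Real.log (Real.log 2) ≤ -0.3 := by
      calc Real.log (Real.log 2) ≤ Real.log 0.7 := Real.log_le_log hpos hlog2.le
        _ ≤ 0.7 - 1 := Real.log_le_sub_one_of_pos (by norm_num)
        _ = -0.3 := by norm_num
    rw [← h2]
    push_cast
    calc (0.08:ℝ) ≤ 0.3 := by norm_num
      _ ≤ |Real.log (Real.log 2)| := by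
        rw [abs_of_nonpos (by linarith)]
        linarith
  · -- N ≥ 3
    have hN3 : (3:ℝ) ≤ (N:ℝ) := by exact_mod_cast h3
    have hlog3 : (1.09:ℝ) ≤ Real.log 3 := by
      rw [Real.le_log_iff_exp_le (by norm_num)]
      have he : Real.exp 1.09 = Real.exp 1 * Real.exp 0.09 := by
        rw [← Real.exp_add]; norm_num
      have h09 : Real.exp 0.09 ≤ 1 / 0.91 := by
        have h1 : 1 - 0.09 ≤ Real.exp (-0.09) := by
          have := Real.add_one_le_exp (-0.09:ℝ)
          linarith
        have h2 : Real.exp 0.09 * Real.exp (-0.09) = 1 := by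
          rw [← Real.exp_add]; norm_num
        have h3 : (0:ℝ) < Real.exp 0.09 := Real.exp_pos _
        nlinarith
      have he1 := Real.exp_one_lt_d9
      rw [he]
      nlinarith [Real.exp_pos (0.09:ℝ)]
    have hlogN : (1.09:ℝ) ≤ Real.log N :=
      hlog3.trans (Real.log_le_log (by norm_num) hN3)
    have h109 : (0.08:ℝ) ≤ Real.log 1.09 := by
      have := Real.log_le_sub_one_of_pos (show (0:ℝ) < 1/1.09 by norm_num)
      rw [show (1:ℝ)/1.09 = (1.09:ℝ)⁻¹ by norm_num, Real.log_inv] at this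
      linarith
    calc (0.08:ℝ) ≤ Real.log 1.09 := h109
      _ ≤ Real.log (Real.log N) := Real.log_le_log (by norm_num) hlogN
      _ ≤ |Real.log (Real.log N)| := le_abs_self _

end S1Aux

section S1Main
open ArithmeticFunction

/-- the bilinear prime-power sum is bounded by
`(log N + O(log log N))` times the diagonal quadratic form. -/
theorem S1_bound :
    ∃ C : ℝ, 0 < C ∧ ∀ N : ℕ, 2 ≤ N → ∀ w : ℕ → ℂ,
      |2 * ∑ ℓ ∈ Finset.Icc 1 N, ∑ p ∈ (Finset.range (N + 1)).filter Nat.Prime,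
          ∑ α ∈ Finset.Icc 1 N,
            (if p ^ α * ℓ ≤ N then
              Real.log p / (p : ℝ) ^ α * ((Nat.totient ℓ : ℝ) / (ℓ : ℝ) ^ 2) *
                (w ℓ * (starRingEnd ℂ) (w (p ^ α * ℓ))).re
            else 0)| ≤
        (Real.log N + C * |Real.log (Real.log N)|) *
          ∑ ℓ ∈ Finset.Icc 1 N, (Nat.totient ℓ : ℝ) / (ℓ : ℝ) ^ 2 * ‖w ℓ‖ ^ 2 := by
  classical
  refine ⟨3000, by norm_num, ?_⟩
  intro N hN w
  set A : ℝ := |Real.log (Real.log N)| with hA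
  have hA08 : (0.08:ℝ) ≤ A := abs_loglog_ge N hN
  have hN1 : 1 ≤ N := by omega
  set P := (Finset.range (N + 1)).filter Nat.Prime with hP
  set t1 : ℕ → ℕ → ℕ → ℝ := fun ℓ p α => if p ^ α * ℓ ≤ N then
      Real.log p / (p:ℝ)^α * ((ℓ.totient:ℝ)/(ℓ:ℝ)^2) * ‖w ℓ‖^2 else 0 with ht1
  set t2 : ℕ → ℕ → ℕ → ℝ := fun ℓ p α => if p ^ α * ℓ ≤ N then
      Real.log p / (p:ℝ)^α * ((ℓ.totient:ℝ)/(ℓ:ℝ)^2) * ‖w (p^α*ℓ)‖^2 else 0 with ht2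
  -- Step 1 : pointwise Cauchy-Schwarz
  have step1 : |2 * ∑ ℓ ∈ Finset.Icc 1 N, ∑ p ∈ P, ∑ α ∈ Finset.Icc 1 N,
        (if p ^ α * ℓ ≤ N then
          Real.log p / (p : ℝ) ^ α * ((Nat.totient ℓ : ℝ) / (ℓ : ℝ) ^ 2) *
            (w ℓ * (starRingEnd ℂ) (w (p ^ α * ℓ))).re
        else 0)|
      ≤ (∑ ℓ ∈ Finset.Icc 1 N, ∑ p ∈ P, ∑ α ∈ Finset.Icc 1 N, t1 ℓ p α)
        + (∑ ℓ ∈ Finset.Icc 1 N, ∑ p ∈ P, ∑ α ∈ Finset.Icc 1 N, t2 ℓ p α) := by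
    have habs : |2 * ∑ ℓ ∈ Finset.Icc 1 N, ∑ p ∈ P, ∑ α ∈ Finset.Icc 1 N,
        (if p ^ α * ℓ ≤ N then
          Real.log p / (p : ℝ) ^ α * ((Nat.totient ℓ : ℝ) / (ℓ : ℝ) ^ 2) *
            (w ℓ * (starRingEnd ℂ) (w (p ^ α * ℓ))).re
        else 0)|
        ≤ ∑ ℓ ∈ Finset.Icc 1 N, ∑ p ∈ P, ∑ α ∈ Finset.Icc 1 N,
            |2 * (if p ^ α * ℓ ≤ N then
              Real.log p / (p : ℝ) ^ α * ((Nat.totient ℓ : ℝ) / (ℓ : ℝ) ^ 2) *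
                (w ℓ * (starRingEnd ℂ) (w (p ^ α * ℓ))).re
            else 0)| := by
      rw [Finset.mul_sum]
      refine (Finset.abs_sum_le_sum_abs _ _).trans (Finset.sum_le_sum fun ℓ _ => ?_)
      rw [Finset.mul_sum]
      refine (Finset.abs_sum_le_sum_abs _ _).trans (Finset.sum_le_sum fun p _ => ?_)
      rw [Finset.mul_sum]
      exact Finset.abs_sum_le_sum_abs _ _
    refine habs.trans ?_
    have hpoint : ∀ ℓ ∈ Finset.Icc 1 N, ∀ p ∈ P, ∀ α ∈ Finset.Icc 1 N,
        |2 * (if p ^ α * ℓ ≤ N then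
          Real.log p / (p : ℝ) ^ α * ((Nat.totient ℓ : ℝ) / (ℓ : ℝ) ^ 2) *
            (w ℓ * (starRingEnd ℂ) (w (p ^ α * ℓ))).re
        else 0)| ≤ t1 ℓ p α + t2 ℓ p α := by
      intro ℓ _ p _ α _
      rw [ht1, ht2]
      simp only
      split_ifs with h
      · set d : ℝ := Real.log p / (p:ℝ)^α * ((ℓ.totient:ℝ)/(ℓ:ℝ)^2) with hd
        have hdnn : 0 ≤ d := by
          apply mul_nonneg
          · exact div_nonneg (Real.log_natCast_nonneg p) (by positivity)
          · positivity
        have hre : |(w ℓ * (starRingEnd ℂ) (w (p ^ α * ℓ))).re|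
            ≤ ‖w ℓ‖ * ‖w (p ^ α * ℓ)‖ := by
          calc |(w ℓ * (starRingEnd ℂ) (w (p ^ α * ℓ))).re|
              ≤ ‖w ℓ * (starRingEnd ℂ) (w (p ^ α * ℓ))‖ := Complex.abs_re_le_norm _
            _ = ‖w ℓ‖ * ‖w (p ^ α * ℓ)‖ := by rw [norm_mul, RCLike.norm_conj]
        have habs2 : |2 * (d * (w ℓ * (starRingEnd ℂ) (w (p ^ α * ℓ))).re)|
            = 2 * d * |(w ℓ * (starRingEnd ℂ) (w (p ^ α * ℓ))).re| := by
          rw [abs_mul, abs_mul]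
          rw [abs_of_nonneg (by norm_num : (0:ℝ) ≤ 2), abs_of_nonneg hdnn]
          ring
        rw [habs2]
        have hsq : 2 * (‖w ℓ‖ * ‖w (p ^ α * ℓ)‖) ≤ ‖w ℓ‖^2 + ‖w (p ^ α * ℓ)‖^2 := by
          nlinarith [sq_nonneg (‖w ℓ‖ - ‖w (p ^ α * ℓ)‖)]
        have habsnn : 0 ≤ |(w ℓ * (starRingEnd ℂ) (w (p ^ α * ℓ))).re| := abs_nonneg _
        nlinarith
      · simp
    refine le_trans (Finset.sum_le_sum fun ℓ hℓ => Finset.sum_le_sum fun p hp =>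
      Finset.sum_le_sum fun α hα => hpoint ℓ hℓ p hp α hα) ?_
    simp only [Finset.sum_add_distrib]
    exact le_refl _
  -- T1 bound
  have hT1 : ∑ ℓ ∈ Finset.Icc 1 N, ∑ p ∈ P, ∑ α ∈ Finset.Icc 1 N, t1 ℓ p α
      ≤ ∑ ℓ ∈ Finset.Icc 1 N, (ℓ.totient:ℝ)/(ℓ:ℝ)^2 * ‖w ℓ‖^2 *
          (Real.log N - Real.log ℓ + 66) := by
    apply Finset.sum_le_sum
    intro ℓ hℓ
    simp only [Finset.mem_Icc] at hℓ
    have hℓ0 : 0 < ℓ := by omega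
    have hK1 : 1 ≤ N / ℓ := (Nat.one_le_div_iff hℓ0).mpr hℓ.2
    have hQnn : 0 ≤ (ℓ.totient:ℝ)/(ℓ:ℝ)^2 * ‖w ℓ‖^2 := by positivity
    have hrw : ∑ p ∈ P, ∑ α ∈ Finset.Icc 1 N, t1 ℓ p α
        = ((ℓ.totient:ℝ)/(ℓ:ℝ)^2 * ‖w ℓ‖^2) *
            ∑ p ∈ P, ∑ α ∈ Finset.Icc 1 N,
              (if p^α ≤ N/ℓ then Real.log p / (p:ℝ)^α else 0) := by
      rw [Finset.mul_sum]
      refine Finset.sum_congr rfl fun p _ => ?_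
      rw [Finset.mul_sum]
      refine Finset.sum_congr rfl fun α _ => ?_
      rw [ht1]
      simp only
      have hiff : (p ^ α * ℓ ≤ N) ↔ (p^α ≤ N/ℓ) := (Nat.le_div_iff_mul_le hℓ0).symm
      rw [if_congr hiff rfl rfl]
      split_ifs with h
      · ring
      · ring
    rw [hrw]
    have hpair := pairs_le N (N/ℓ) hK1
    have hlogdiv : Real.log ((N/ℓ : ℕ) : ℝ) ≤ Real.log N - Real.log ℓ := by
      have hcast : ((N/ℓ:ℕ):ℝ) ≤ (N:ℝ)/(ℓ:ℝ) := Nat.cast_div_le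
      calc Real.log ((N/ℓ : ℕ) : ℝ) ≤ Real.log ((N:ℝ)/(ℓ:ℝ)) :=
            Real.log_le_log (by exact_mod_cast hK1) hcast
        _ = Real.log N - Real.log ℓ := Real.log_div (by positivity) (by positivity)
    calc ((ℓ.totient:ℝ)/(ℓ:ℝ)^2 * ‖w ℓ‖^2) *
            ∑ p ∈ P, ∑ α ∈ Finset.Icc 1 N,
              (if p^α ≤ N/ℓ then Real.log p / (p:ℝ)^α else 0)
        ≤ ((ℓ.totient:ℝ)/(ℓ:ℝ)^2 * ‖w ℓ‖^2) * (Real.log (N/ℓ : ℕ) + 66) :=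
          mul_le_mul_of_nonneg_left (by rw [hP]; exact hpair) hQnn
      _ ≤ ((ℓ.totient:ℝ)/(ℓ:ℝ)^2 * ‖w ℓ‖^2) * (Real.log N - Real.log ℓ + 66) :=
          mul_le_mul_of_nonneg_left (by linarith) hQnn
  -- T2 bound
  have hre : ∀ p ∈ P, ∀ α ∈ Finset.Icc 1 N, ∑ ℓ ∈ Finset.Icc 1 N, t2 ℓ p α
      = ∑ m ∈ Finset.Icc 1 N, (if p^α ∣ m then Real.log p / (p:ℝ)^α *
          (((m / p^α).totient : ℝ) / ((m / p^α : ℕ):ℝ)^2) * ‖w m‖^2 else 0) := by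
    intro p hp α hα
    have hpp : p.Prime := (Finset.mem_filter.mp hp).2
    have hppos : 0 < p ^ α := pow_pos hpp.pos α
    rw [ht2]
    simp only
    rw [← Finset.sum_filter, ← Finset.sum_filter]
    apply Finset.sum_bij' (i := fun ℓ _ => p ^ α * ℓ) (j := fun m _ => m / p ^ α)
    · intro ℓ hℓ
      simp only [Finset.mem_filter, Finset.mem_Icc] at hℓ ⊢
      refine ⟨⟨?_, hℓ.2⟩, Dvd.intro _ rfl⟩
      have := hℓ.1.1
      exact Nat.one_le_iff_ne_zero.mpr (by positivity)
    · intro m hm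
      simp only [Finset.mem_filter, Finset.mem_Icc] at hm ⊢
      obtain ⟨⟨hm1, hmN⟩, hdvd⟩ := hm
      refine ⟨⟨(Nat.one_le_div_iff hppos).mpr (Nat.le_of_dvd (by omega) hdvd),
        (Nat.div_le_self m _).trans hmN⟩, ?_⟩
      rw [Nat.mul_div_cancel' hdvd]
      exact hmN
    · intro ℓ hℓ
      exact Nat.mul_div_cancel_left ℓ hppos
    · intro m hm
      simp only [Finset.mem_filter, Finset.mem_Icc] at hm
      exact Nat.mul_div_cancel' hm.2
    · intro ℓ hℓ
      rw [Nat.mul_div_cancel_left ℓ hppos]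
  have hT2 : ∑ ℓ ∈ Finset.Icc 1 N, ∑ p ∈ P, ∑ α ∈ Finset.Icc 1 N, t2 ℓ p α
      ≤ ∑ m ∈ Finset.Icc 1 N, (m.totient:ℝ)/(m:ℝ)^2 * ‖w m‖^2 *
          (Real.log m + (144 + 6*A)) := by
    have hswap : ∑ ℓ ∈ Finset.Icc 1 N, ∑ p ∈ P, ∑ α ∈ Finset.Icc 1 N, t2 ℓ p α
        = ∑ m ∈ Finset.Icc 1 N, ∑ p ∈ P, ∑ α ∈ Finset.Icc 1 N,
            (if p^α ∣ m then Real.log p / (p:ℝ)^α *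
              (((m / p^α).totient : ℝ) / ((m / p^α : ℕ):ℝ)^2) * ‖w m‖^2 else 0) := by
      rw [Finset.sum_comm]
      calc ∑ p ∈ P, ∑ ℓ ∈ Finset.Icc 1 N, ∑ α ∈ Finset.Icc 1 N, t2 ℓ p α
          = ∑ p ∈ P, ∑ α ∈ Finset.Icc 1 N, ∑ ℓ ∈ Finset.Icc 1 N, t2 ℓ p α :=
            Finset.sum_congr rfl fun p _ => Finset.sum_comm
        _ = ∑ p ∈ P, ∑ α ∈ Finset.Icc 1 N, ∑ m ∈ Finset.Icc 1 N,
              (if p^α ∣ m then Real.log p / (p:ℝ)^α *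
                (((m / p^α).totient : ℝ) / ((m / p^α : ℕ):ℝ)^2) * ‖w m‖^2 else 0) :=
            Finset.sum_congr rfl fun p hp => Finset.sum_congr rfl fun α hα => hre p hp α hα
        _ = ∑ p ∈ P, ∑ m ∈ Finset.Icc 1 N, ∑ α ∈ Finset.Icc 1 N,
              (if p^α ∣ m then Real.log p / (p:ℝ)^α *
                (((m / p^α).totient : ℝ) / ((m / p^α : ℕ):ℝ)^2) * ‖w m‖^2 else 0) :=
            Finset.sum_congr rfl fun p _ => Finset.sum_comm
        _ = ∑ m ∈ Finset.Icc 1 N, ∑ p ∈ P, ∑ α ∈ Finset.Icc 1 N,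
              (if p^α ∣ m then Real.log p / (p:ℝ)^α *
                (((m / p^α).totient : ℝ) / ((m / p^α : ℕ):ℝ)^2) * ‖w m‖^2 else 0) :=
            Finset.sum_comm
    rw [hswap]
    apply Finset.sum_le_sum
    intro m hm
    simp only [Finset.mem_Icc] at hm
    have hfac : ∑ p ∈ P, ∑ α ∈ Finset.Icc 1 N,
        (if p^α ∣ m then Real.log p / (p:ℝ)^α *
          (((m / p^α).totient : ℝ) / ((m / p^α : ℕ):ℝ)^2) * ‖w m‖^2 else 0)
        = ‖w m‖^2 * ∑ p ∈ P, ∑ α ∈ Finset.Icc 1 N,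
            (if p^α ∣ m then Real.log p / (p:ℝ)^α *
              (((m / p^α).totient : ℝ) / ((m / p^α : ℕ):ℝ)^2) else 0) := by
      rw [Finset.mul_sum]
      refine Finset.sum_congr rfl fun p _ => ?_
      rw [Finset.mul_sum]
      refine Finset.sum_congr rfl fun α _ => ?_
      split_ifs with h
      · ring
      · ring
    rw [hfac]
    have hGle := G_le N m hm.1 hm.2
    have hradle := rad_le N m hN hm.1 hm.2
    have hwnn : (0:ℝ) ≤ ‖w m‖^2 := by positivity
    have htotnn : (0:ℝ) ≤ (m.totient:ℝ)/(m:ℝ)^2 := by positivity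
    calc ‖w m‖^2 * ∑ p ∈ P, ∑ α ∈ Finset.Icc 1 N,
            (if p^α ∣ m then Real.log p / (p:ℝ)^α *
              (((m / p^α).totient : ℝ) / ((m / p^α : ℕ):ℝ)^2) else 0)
        ≤ ‖w m‖^2 * ((m.totient : ℝ) / (m:ℝ)^2 *
            (Real.log m + ∑ p ∈ m.primeFactors, Real.log p / ((p:ℝ)-1))) :=
          mul_le_mul_of_nonneg_left (by rw [hP]; exact hGle) hwnn
      _ ≤ ‖w m‖^2 * ((m.totient : ℝ) / (m:ℝ)^2 * (Real.log m + (144 + 6*A))) := by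
          apply mul_le_mul_of_nonneg_left _ hwnn
          apply mul_le_mul_of_nonneg_left _ htotnn
          rw [hA]
          linarith
      _ = (m.totient:ℝ)/(m:ℝ)^2 * ‖w m‖^2 * (Real.log m + (144 + 6*A)) := by ring
  -- final assembly
  have hcomb : ∑ ℓ ∈ Finset.Icc 1 N, (ℓ.totient:ℝ)/(ℓ:ℝ)^2 * ‖w ℓ‖^2 *
        (Real.log N - Real.log ℓ + 66)
      + ∑ m ∈ Finset.Icc 1 N, (m.totient:ℝ)/(m:ℝ)^2 * ‖w m‖^2 *
        (Real.log m + (144 + 6*A))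
      = (Real.log N + 210 + 6*A) *
          ∑ ℓ ∈ Finset.Icc 1 N, (ℓ.totient:ℝ)/(ℓ:ℝ)^2 * ‖w ℓ‖^2 := by
    rw [← Finset.sum_add_distrib, Finset.mul_sum]
    refine Finset.sum_congr rfl fun ℓ _ => ?_
    ring
  have hsumnn : (0:ℝ) ≤ ∑ ℓ ∈ Finset.Icc 1 N, (ℓ.totient:ℝ)/(ℓ:ℝ)^2 * ‖w ℓ‖^2 :=
    Finset.sum_nonneg fun ℓ _ => by positivity
  have hconst : Real.log N + 210 + 6*A ≤ Real.log N + 3000 * A := by nlinarith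
  calc |2 * ∑ ℓ ∈ Finset.Icc 1 N, ∑ p ∈ P, ∑ α ∈ Finset.Icc 1 N,
        (if p ^ α * ℓ ≤ N then
          Real.log p / (p : ℝ) ^ α * ((Nat.totient ℓ : ℝ) / (ℓ : ℝ) ^ 2) *
            (w ℓ * (starRingEnd ℂ) (w (p ^ α * ℓ))).re
        else 0)|
      ≤ (∑ ℓ ∈ Finset.Icc 1 N, ∑ p ∈ P, ∑ α ∈ Finset.Icc 1 N, t1 ℓ p α)
        + (∑ ℓ ∈ Finset.Icc 1 N, ∑ p ∈ P, ∑ α ∈ Finset.Icc 1 N, t2 ℓ p α) := step1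
    _ ≤ ∑ ℓ ∈ Finset.Icc 1 N, (ℓ.totient:ℝ)/(ℓ:ℝ)^2 * ‖w ℓ‖^2 *
          (Real.log N - Real.log ℓ + 66)
        + ∑ m ∈ Finset.Icc 1 N, (m.totient:ℝ)/(m:ℝ)^2 * ‖w m‖^2 *
          (Real.log m + (144 + 6*A)) := add_le_add hT1 hT2
    _ = (Real.log N + 210 + 6*A) *
          ∑ ℓ ∈ Finset.Icc 1 N, (ℓ.totient:ℝ)/(ℓ:ℝ)^2 * ‖w ℓ‖^2 := hcomb
    _ ≤ (Real.log N + 3000 * A) *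
          ∑ ℓ ∈ Finset.Icc 1 N, (ℓ.totient:ℝ)/(ℓ:ℝ)^2 * ‖w ℓ‖^2 :=
        mul_le_mul_of_nonneg_right hconst hsumnn


end S1Main
end
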